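/- Let (G,v) and (G',v') be connected pointed graphs and let d ≥ 0. If G and G' are distinguished by WL-IR with d individualization steps (G ≢_{WL-IR-d} G'), then there exists an HE-GNN A of nesting depth d+1 such that cls_A(G,v) ≠ cls_A(G',v'). -/

import Mathlib

open Classical

/-! ### Graphs with `p` binary node features -/

/-- A finite undirected graph with node labels over `p` binary features. -/
structure LGraph (p : ℕ) : Type 1 where
  V : Type
  fintypeV : Fintype V
  decEqV : DecidableEq V
  adj : V → V → Prop
  symm : ∀ {u v}, adj u v → adj v u
  irrefl : ∀ v, ¬ adj v v
  lab : V → Fin p → Prop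

attribute [instance] LGraph.fintypeV LGraph.decEqV

namespace LGraph

variable {p : ℕ}

/-- The finset of neighbours of a node. -/
noncomputable def nbrFinset (G : LGraph p) (v : G.V) : Finset G.V :=
  Finset.univ.filter (fun u => G.adj v u)

/-- Multi-hot label encoding. -/
noncomputable def embG (G : LGraph p) (v : G.V) : Fin p → ℝ :=
  fun i => if G.lab v i then 1 else 0

/-- `G.within v r u` : node `u` is at distance at most `r` from `v`. -/
def within (G : LGraph p) (v : G.V) : ℕ → G.V → Prop
  | 0 => fun u => u = v
  | (r+1) => fun u => G.within v r u ∨ ∃ w, G.within v r w ∧ G.adj w u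

theorem within_self (G : LGraph p) (v : G.V) : ∀ r, G.within v r v
  | 0 => rfl
  | (r+1) => Or.inl (G.within_self v r)

/-- Induced subgraph on a set of nodes. -/
noncomputable def induce (G : LGraph p) (S : Set G.V) : LGraph p where
  V := {u // u ∈ S}
  fintypeV := Fintype.ofFinite _
  decEqV := inferInstance
  adj a b := G.adj a.1 b.1
  symm h := G.symm h
  irrefl a h := G.irrefl a.1 h
  lab a := G.lab a.1

/-- `G_v^r` : the induced subgraph on the radius-`r` neighbourhood of `v`. -/
noncomputable def ball (G : LGraph p) (v : G.V) (r : ℕ) : LGraph p :=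
  G.induce {u | G.within v r u}

/-- The centre of `G_v^r`, as a node of `G_v^r`. -/
noncomputable def ballCenter (G : LGraph p) (v : G.V) (r : ℕ) : (G.ball v r).V :=
  ⟨v, G.within_self v r⟩

end LGraph

/-! ### GNNs -/

/-- A single message-passing layer: aggregation over the multiset of neighbour
embeddings and combination of the node embedding (concatenated via `Fin.append`)
with the aggregated value. -/
structure GNNLayer (Din Dout : ℕ) : Type where
  agg : Multiset (Fin Din → ℝ) → (Fin Din → ℝ)
  com : (Fin (Din + Din) → ℝ) → (Fin Dout → ℝ)

/-- A `(D,D')`-GNN: a nonempty sequence of layers with matching dimensions. -/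
inductive GNN : ℕ → ℕ → Type
  | last {D D'} (l : GNNLayer D D') : GNN D D'
  | cons {D Dm D'} (l : GNNLayer D Dm) (rest : GNN Dm D') : GNN D D'

noncomputable def GNNLayer.apply {p Din Dout : ℕ} (l : GNNLayer Din Dout) (G : LGraph p)
    (emb : G.V → Fin Din → ℝ) : G.V → Fin Dout → ℝ :=
  fun v => l.com (Fin.append (emb v) (l.agg ((G.nbrFinset v).val.map emb)))

/-- Running a GNN on an embedded graph. -/
noncomputable def GNN.run {p : ℕ} : {D D' : ℕ} → GNN D D' → (G : LGraph p) →
    (G.V → Fin D → ℝ) → (G.V → Fin D' → ℝ)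
  | _, _, .last l, G, emb => l.apply G emb
  | _, _, .cons l rest, G, emb => rest.run G (l.apply G emb)

/-- The node classifier of a `(p,1)`-GNN (as a proposition: value `1` ↔ output `> 0`). -/
def GNN.clsP {p : ℕ} (A : GNN p 1) (G : LGraph p) (v : G.V) : Prop :=
  0 < A.run G G.embG v 0

/-- The node classifier of a `(p,1)`-GNN, as a boolean value. -/
noncomputable def GNN.cls {p : ℕ} (A : GNN p 1) (G : LGraph p) (v : G.V) : Bool :=
  if A.clsP G v then true else false

/-! ### Hierarchical Ego GNNs -/

/-- A `(D,D')`-HE-GNN of nesting depth `d`. -/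
inductive HEGNN : ℕ → ℕ → ℕ → Type
  | base {D D'} (A : GNN D D') : HEGNN 0 D D'
  | nest {d D D'' D'} (B : HEGNN d (D+1) D'') (C : GNN (D + D'') D') : HEGNN (d+1) D D'

noncomputable def HEGNN.run {p : ℕ} : {d D D' : ℕ} → HEGNN d D D' → (G : LGraph p) →
    (G.V → Fin D → ℝ) → (G.V → Fin D' → ℝ)
  | _, _, _, .base A, G, emb => A.run G emb
  | _, _, _, .nest B C, G, emb =>
      C.run G (fun v => Fin.append (emb v)
        (B.run G (fun u => Fin.append (emb u) (fun _ => if u = v then (1:ℝ) else 0)) v))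

def HEGNN.clsP {p d : ℕ} (A : HEGNN d p 1) (G : LGraph p) (v : G.V) : Prop :=
  0 < A.run G G.embG v 0

noncomputable def HEGNN.cls {p d : ℕ} (A : HEGNN d p 1) (G : LGraph p) (v : G.V) : Bool :=
  if A.clsP G v then true else false

/-! ### Hierarchical Ego Subgraph GNNs -/

/-- A `(D,D')`-HES-GNN of depth `d`; each nesting step carries its own radius `r`. -/
inductive HESGNN : ℕ → ℕ → ℕ → Type
  | base {D D'} (A : GNN D D') : HESGNN 0 D D'
  | nest {d D D'' D'} (r : ℕ) (B : HESGNN d (D+1) D'') (C : GNN (D + D'') D') :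
      HESGNN (d+1) D D'

noncomputable def HESGNN.run {p : ℕ} : {d D D' : ℕ} → HESGNN d D D' → (G : LGraph p) →
    (G.V → Fin D → ℝ) → (G.V → Fin D' → ℝ)
  | _, _, _, .base A, G, emb => A.run G emb
  | _, _, _, .nest r B C, G, emb =>
      C.run G (fun v => Fin.append (emb v)
        (B.run (G.ball v r)
          (fun u => Fin.append (emb u.1) (fun _ => if u.1 = v then (1:ℝ) else 0))
          (G.ballCenter v r)))

/-- All subgraph restrictions in the HES-GNN use radius `r`. -/
def HESGNN.radIs : {d D D' : ℕ} → ℕ → HESGNN d D D' → Prop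
  | _, _, _, _, .base _ => True
  | _, _, _, r, .nest r' B _ => r' = r ∧ B.radIs r

def HESGNN.clsP {p d : ℕ} (A : HESGNN d p 1) (G : LGraph p) (v : G.V) : Prop :=
  0 < A.run G G.embG v 0

noncomputable def HESGNN.cls {p d : ℕ} (A : HESGNN d p 1) (G : LGraph p) (v : G.V) : Bool :=
  if A.clsP G v then true else false
/-! ### Graded modal logic GML -/

inductive GML (p : ℕ) : Type
  | prop (i : Fin p)
  | top
  | and (φ ψ : GML p)
  | not (φ : GML p)
  | dia (k : ℕ) (φ : GML p)

/-- Satisfaction of a GML formula at a node. -/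
def GML.sat {p : ℕ} (G : LGraph p) : GML p → G.V → Prop
  | .prop i, v => G.lab v i
  | .top, _ => True
  | .and φ ψ, v => φ.sat G v ∧ ψ.sat G v
  | .not φ, v => ¬ φ.sat G v
  | .dia k φ, v => k ≤ Nat.card {u : G.V // G.adj v u ∧ φ.sat G u}

/-! ### Graded hybrid logic GML(↓) -/

inductive GMLd (p : ℕ) : Type
  | prop (i : Fin p)
  | var (x : ℕ)
  | top
  | and (φ ψ : GMLd p)
  | not (φ : GMLd p)
  | dia (k : ℕ) (φ : GMLd p)
  | bind (x : ℕ) (φ : GMLd p)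

/-- Satisfaction of a GML(↓) formula at a node, relative to an assignment of
variables to (marked) nodes; `↓x.φ` marks the current node with `x`. -/
def GMLd.sat {p : ℕ} (G : LGraph p) : GMLd p → (ℕ → Option G.V) → G.V → Prop
  | .prop i, _, v => G.lab v i
  | .var x, g, v => g x = some v
  | .top, _, _ => True
  | .and φ ψ, g, v => φ.sat G g v ∧ ψ.sat G g v
  | .not φ, g, v => ¬ φ.sat G g v
  | .dia k φ, g, v => k ≤ Nat.card {u : G.V // G.adj v u ∧ φ.sat G g u}
  | .bind x φ, g, v => φ.sat G (Function.update g x (some v)) v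

def GMLd.free {p : ℕ} : GMLd p → Set ℕ
  | .prop _ => ∅
  | .var x => {x}
  | .top => ∅
  | .and φ ψ => φ.free ∪ ψ.free
  | .not φ => φ.free
  | .dia _ φ => φ.free
  | .bind x φ => φ.free \ {x}

/-- A sentence has no free variables. -/
def GMLd.Sentence {p : ℕ} (φ : GMLd p) : Prop := φ.free = ∅

/-- The ↓-nesting-depth of a formula. -/
def GMLd.bindDepth {p : ℕ} : GMLd p → ℕ
  | .prop _ => 0
  | .var _ => 0
  | .top => 0
  | .and φ ψ => max φ.bindDepth ψ.bindDepth
  | .not φ => φ.bindDepth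
  | .dia _ φ => φ.bindDepth
  | .bind _ φ => φ.bindDepth + 1

/-- Satisfaction of a sentence (empty assignment). -/
def GMLd.satS {p : ℕ} (G : LGraph p) (φ : GMLd p) (v : G.V) : Prop :=
  φ.sat G (fun _ => none) v

/-! ### Graded hybrid subgraph logic: the fragment GML(↓_W) -/

inductive GMLW (p : ℕ) : Type
  | prop (i : Fin p)
  | var (x : ℕ)
  | top
  | and (φ ψ : GMLW p)
  | not (φ : GMLW p)
  | dia (k : ℕ) (φ : GMLW p)
  /-- `↓_{W^r} x. φ`, i.e. `↓x. W^r φ`. -/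
  | bindW (x : ℕ) (r : ℕ) (φ : GMLW p)

/-- Restrict an assignment along passage to an induced subgraph: markings of
nodes outside the subgraph disappear. -/
noncomputable def restrictAssign {p : ℕ} {G : LGraph p} (S : Set G.V)
    (g : ℕ → Option G.V) : ℕ → Option (G.induce S).V :=
  fun x => (g x).bind (fun w => if h : w ∈ S then some ⟨w, h⟩ else none)

/-- Satisfaction for the fragment GML(↓_W): `↓x.W^r φ` marks the current node `v`
with `x` and evaluates `φ` in the subgraph `G_v^r`. -/
noncomputable def GMLW.sat {p : ℕ} : GMLW p → (G : LGraph p) → (ℕ → Option G.V) → G.V → Prop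
  | .prop i, G, _, v => G.lab v i
  | .var x, _, g, v => g x = some v
  | .top, _, _, _ => True
  | .and φ ψ, G, g, v => φ.sat G g v ∧ ψ.sat G g v
  | .not φ, G, g, v => ¬ φ.sat G g v
  | .dia k φ, G, g, v => k ≤ Nat.card {u : G.V // G.adj v u ∧ φ.sat G g u}
  | .bindW x r φ, G, g, v =>
      φ.sat (G.ball v r) (restrictAssign _ (Function.update g x (some v))) (G.ballCenter v r)

def GMLW.free {p : ℕ} : GMLW p → Set ℕ
  | .prop _ => ∅
  | .var x => {x}
  | .top => ∅
  | .and φ ψ => φ.free ∪ ψ.free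
  | .not φ => φ.free
  | .dia _ φ => φ.free
  | .bindW x _ φ => φ.free \ {x}

def GMLW.Sentence {p : ℕ} (φ : GMLW p) : Prop := φ.free = ∅

/-- The nesting depth of `↓_{W^r}` operators. -/
def GMLW.bindDepth {p : ℕ} : GMLW p → ℕ
  | .prop _ => 0
  | .var _ => 0
  | .top => 0
  | .and φ ψ => max φ.bindDepth ψ.bindDepth
  | .not φ => φ.bindDepth
  | .dia _ φ => φ.bindDepth
  | .bindW _ _ φ => φ.bindDepth + 1

/-- All `↓_{W}` operators in the formula use radius `r`. -/
def GMLW.radIs {p : ℕ} (r : ℕ) : GMLW p → Prop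
  | .prop _ => True
  | .var _ => True
  | .top => True
  | .and φ ψ => φ.radIs r ∧ ψ.radIs r
  | .not φ => φ.radIs r
  | .dia _ φ => φ.radIs r
  | .bindW _ r' φ => r' = r ∧ φ.radIs r

noncomputable def GMLW.satS {p : ℕ} (G : LGraph p) (φ : GMLW p) (v : G.V) : Prop :=
  φ.sat G (fun _ => none) v
/-! ### Weisfeiler–Leman and Individualization-Refinement -/

/-- An (ordered) space of colors together with a perfect (injective) hash
function whose domains are: node labelings (initial colors), pairs of a color
and a multiset of colors (refinement), and pairs of a color and a marking
(individualization). -/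
structure HashSetup (p : ℕ) : Type 1 where
  C : Type
  linC : LinearOrder C
  hInit : (Fin p → Prop) → C
  hRefine : C → Multiset C → C
  hIndiv : C → Prop → C
  inj : Function.Injective
    (Sum.elim hInit (Sum.elim (fun y : C × Multiset C => hRefine y.1 y.2)
      (fun y : C × Prop => hIndiv y.1 y.2)))

/-- A coloring is discrete if all color classes are singletons. -/
def Discrete {V C : Type} (col : V → C) : Prop :=
  ∀ u w, col u = col w → u = w

/-- One round of color refinement. -/
noncomputable def wlStep {p : ℕ} (H : HashSetup p) (G : LGraph p)
    (col : G.V → H.C) : G.V → H.C :=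
  fun v => H.hRefine (col v) ((G.nbrFinset v).val.map col)

/-- `wlIter H G d col` = `WL(G, col, d)`. -/
noncomputable def wlIter {p : ℕ} (H : HashSetup p) (G : LGraph p) :
    ℕ → (G.V → H.C) → (G.V → H.C)
  | 0, col => col
  | (d+1), col => wlStep H G (wlIter H G d col)

/-- The initial coloring `col_G`. -/
noncomputable def initCol {p : ℕ} (H : HashSetup p) (G : LGraph p) : G.V → H.C :=
  fun v => H.hInit (G.lab v)

/-- Rose trees labeled by multisets of colors.  (Children are kept in a list;
the isomorphism relation below disregards their order.) -/
inductive CTree (C : Type) : Type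
  | node (label : Multiset C) (children : List (CTree C))

/-- Isomorphism of trees whose nodes are labeled by multisets of colors. -/
inductive CTree.Iso {C : Type} : CTree C → CTree C → Prop
  | node {l : Multiset C} {cs1 cs2 : List (CTree C)}
      (e : Fin cs1.length ≃ Fin cs2.length)
      (h : ∀ i : Fin cs1.length, CTree.Iso (cs1.get i) (cs2.get (e i))) :
      CTree.Iso (.node l cs1) (.node l cs2)

/-- The multiset of all colors of a coloring. -/
noncomputable def colMultiset {p : ℕ} (H : HashSetup p) (G : LGraph p)
    (col : G.V → H.C) : Multiset H.C :=
  Finset.univ.val.map col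

/-- `WLIR H G d col` = the IR tree `WL-IR(G, col, d)` with at most `d`
individualization steps, with colorings recorded by their color multisets. -/
noncomputable def WLIR {p : ℕ} (H : HashSetup p) (G : LGraph p) :
    ℕ → (G.V → H.C) → CTree H.C
  | 0, col => .node (colMultiset H G (wlIter H G (Fintype.card G.V) col)) []
  | (d+1), col =>
    let col' := wlIter H G (Fintype.card G.V) col
    if hdisc : Discrete col' then .node (colMultiset H G col') []
    else
      letI := H.linC
      let bigs : Finset H.C := (Finset.univ.image col').filter
        (fun c => 1 < (Finset.univ.filter (fun v => col' v = c)).card)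
      have hne : bigs.Nonempty := by
        simp only [Discrete, not_forall] at hdisc
        obtain ⟨u, w, hc, hne'⟩ := hdisc
        refine ⟨col' u, Finset.mem_filter.mpr
          ⟨Finset.mem_image_of_mem _ (Finset.mem_univ u), ?_⟩⟩
        exact Finset.one_lt_card.mpr
          ⟨u, by simp, w, by simp [hc.symm], hne'⟩
      let c := bigs.min' hne
      .node (colMultiset H G col')
        (((Finset.univ.filter (fun v => col' v = c)).toList).map
          (fun vi => WLIR H G d (fun v => H.hIndiv (col' v) (v = vi))))

/-- `G ≡_{WL-IR-d} G'` : the IR trees with `d` individualization steps are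
isomorphic. -/
noncomputable def WLIRequiv {p : ℕ} (H : HashSetup p) (G G' : LGraph p) (d : ℕ) : Prop :=
  CTree.Iso (WLIR H G d (initCol H G)) (WLIR H G' d (initCol H G'))

/-- Isomorphism of labeled graphs. -/
def LGraph.Iso {p : ℕ} (G G' : LGraph p) : Prop :=
  ∃ f : G.V ≃ G'.V, (∀ u v, G.adj u v ↔ G'.adj (f u) (f v)) ∧
    ∀ v i, G.lab v i ↔ G'.lab (f v) i
/-! ### The k-dimensional Weisfeiler–Leman test -/

/-- The type of `k`-WL colors after `i` refinement rounds (shared between all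
graphs, so colors of different graphs are directly comparable). -/
def KColor (p k : ℕ) : ℕ → Type
  | 0 => ((Fin k → Fin k → Prop) × (Fin k → Fin k → Prop) × (Fin k → Fin p → Prop))
  | (i+1) => KColor p k i × (Fin k → Multiset (KColor p k i))

/-- The `k`-WL coloring of `k`-tuples after `i` rounds: the initial color is the
isomorphism type of the tuple (equalities, adjacencies, labels); each round
refines by, for each position, the multiset of colors of all one-point
modifications of the tuple. -/
noncomputable def kwl (p k : ℕ) (G : LGraph p) :
    (i : ℕ) → (Fin k → G.V) → KColor p k i
  | 0, t => (fun i j => t i = t j, fun i j => G.adj (t i) (t j), fun i a => G.lab (t i) a)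
  | (i+1), t => (kwl p k G i t,
      fun j => Finset.univ.val.map (fun w => kwl p k G i (Function.update t j w)))

/-- `(G,v)` and `(G',v')` are *not* distinguished by the `k`-dimensional WL test:
the colors of the constant tuples `(v,…,v)` and `(v',…,v')` agree at every round
(equivalently, the stable colors agree). -/
noncomputable def kwlEquiv (p k : ℕ) (G : LGraph p) (v : G.V) (G' : LGraph p) (v' : G'.V) : Prop :=
  ∀ i : ℕ, kwl p k G i (fun _ => v) = kwl p k G' i (fun _ => v')
/-! ### Rooted graphs, homomorphism counts, Sum/ReLU-FFNN GNNs, degree bounds -/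

namespace LGraph
variable {p : ℕ}

/-- `(F,u)` is a rooted graph: every node is reachable from `u`. -/
def Rooted (F : LGraph p) (u : F.V) : Prop := ∀ w, ∃ r, F.within u r w

/-- Every node of `G` has degree at most `N`. -/
def degLe (G : LGraph p) (N : ℕ) : Prop := ∀ v, Nat.card {u : G.V // G.adj v u} ≤ N

end LGraph

/-- The number of homomorphisms from the pointed graph `(F,u)` to `(G,v)`:
maps sending the root to `v`, preserving edges, and preserving labels. -/
noncomputable def homCount {p : ℕ} (F G : LGraph p) (u : F.V) (v : G.V) : ℕ :=
  Nat.card {h : F.V → G.V //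
    h u = v ∧ (∀ ⦃w w'⦄, F.adj w w' → G.adj (h w) (h w')) ∧
    ∀ w i, F.lab w i → G.lab (h w) i}

/-- Pointwise sum aggregation. -/
def sumAgg (D : ℕ) : Multiset (Fin D → ℝ) → (Fin D → ℝ) :=
  fun M i => (M.map (fun x => x i)).sum

/-- ReLU feed-forward neural networks: compositions of affine maps and
coordinatewise ReLU. -/
inductive IsReLUFFNN : {n m : ℕ} → ((Fin n → ℝ) → (Fin m → ℝ)) → Prop
  | affine {n m : ℕ} (W : Matrix (Fin m) (Fin n) ℝ) (b : Fin m → ℝ) :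
      IsReLUFFNN (fun x => W.mulVec x + b)
  | relu {n : ℕ} : IsReLUFFNN (fun (x : Fin n → ℝ) i => max 0 (x i))
  | comp {n m k : ℕ} {f : (Fin n → ℝ) → (Fin m → ℝ)} {g : (Fin m → ℝ) → (Fin k → ℝ)} :
      IsReLUFFNN f → IsReLUFFNN g → IsReLUFFNN (fun x => g (f x))

/-- A layer uses Sum aggregation and a ReLU-FFNN combination function. -/
def GNNLayer.SumReLU {Din Dout : ℕ} (l : GNNLayer Din Dout) : Prop :=
  l.agg = sumAgg Din ∧ IsReLUFFNN l.com

def GNN.SumReLU : {D D' : ℕ} → GNN D D' → Prop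
  | _, _, .last l => l.SumReLU
  | _, _, .cons l rest => l.SumReLU ∧ rest.SumReLU

def HEGNN.SumReLU : {d D D' : ℕ} → HEGNN d D D' → Prop
  | _, _, _, .base A => A.SumReLU
  | _, _, _, .nest B C => B.SumReLU ∧ C.SumReLU
/-! ### Cycles, acyclicity, ego-rank, tree-width -/

namespace LGraph
variable {p : ℕ}

/-- There is a cycle (length ≥ 3, distinct nodes, consecutive nodes adjacent,
cyclically) all of whose nodes lie in `S`. -/
def CycleIn (G : LGraph p) (S : Set G.V) : Prop :=
  ∃ (n : ℕ) (c : Fin n → G.V), 3 ≤ n ∧ Function.Injective c ∧ (∀ i, c i ∈ S) ∧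
    ∀ i : Fin n, G.adj (c i) (c ⟨(i.val + 1) % n, Nat.mod_lt _ i.pos⟩)

/-- `G` is acyclic. -/
def Acyclic (G : LGraph p) : Prop := ¬ G.CycleIn Set.univ

/-- `(G,v)` is c-acyclic: every cycle of `G` passes through `v`. -/
def CAcyclic (G : LGraph p) (v : G.V) : Prop :=
  ∀ (n : ℕ) (c : Fin n → G.V), 3 ≤ n → Function.Injective c →
    (∀ i : Fin n, G.adj (c i) (c ⟨(i.val + 1) % n, Nat.mod_lt _ i.pos⟩)) →
    ∃ i, c i = v

/-- Reachability inside a set `S` (paths are required to stay in `S`). -/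
inductive ReachIn (G : LGraph p) (S : Set G.V) : G.V → G.V → Prop
  | refl {a} (ha : a ∈ S) : ReachIn G S a a
  | tail {a b c} : ReachIn G S a b → G.adj b c → c ∈ S → ReachIn G S a c

/-- The set `S` induces a connected subgraph. -/
def ConnectedIn (G : LGraph p) (S : Set G.V) : Prop :=
  ∀ a ∈ S, ∀ b ∈ S, G.ReachIn S a b

/-- `G` is connected. -/
def Connected (G : LGraph p) : Prop := ∀ a b : G.V, ∃ r, G.within a r b

end LGraph

/-! #### Ego-rank -/

/-- Transitive closure of a partial map `dep` (so `DepCl dep w x` means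
`x ∈ deps(w) = {dep(w), dep(dep(w)), …} \ {⊥}`). -/
inductive DepCl {V : Type} (dep : V → Option V) : V → V → Prop
  | base {w x} : dep w = some x → DepCl dep w x
  | step {w x y} : DepCl dep w x → dep x = some y → DepCl dep w y

/-- `deps(w)` as a set. -/
def deps {V : Type} (dep : V → Option V) (w : V) : Set V := {x | DepCl dep w x}

/-- `dep` is a dependency function for the rooted graph `(G,v)`. -/
def IsDepFun {p : ℕ} (G : LGraph p) (v : G.V) (dep : G.V → Option G.V) : Prop :=
  dep v = none ∧
  (∀ {w u}, G.adj w u → dep w = dep u ∨ w ∈ deps dep u ∨ u ∈ deps dep w) ∧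
  (∀ o : Option G.V, ¬ G.CycleIn {w | dep w = o})

/-- The node rank of a node: `|deps(w)|`. -/
noncomputable def nodeRank {V : Type} (dep : V → Option V) (w : V) : ℕ :=
  Nat.card {x // DepCl dep w x}

/-- Ego-rank: the smallest achievable maximum node rank over all dependency
functions. -/
noncomputable def egoRank {p : ℕ} (G : LGraph p) (v : G.V) : ℕ :=
  sInf {k | ∃ dep, IsDepFun G v dep ∧ ∀ w, nodeRank dep w ≤ k}

/-! #### Tree decompositions and tree-width -/

/-- A tree decomposition of `G`: a (connected, acyclic) tree `T` with bags
covering all nodes and edges, such that each node's bags form a connected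
subtree. -/
structure TreeDecomp (p : ℕ) (G : LGraph p) : Type 1 where
  T : LGraph 0
  conn : T.Connected
  acyc : T.Acyclic
  bag : T.V → Set G.V
  cover_v : ∀ u : G.V, ∃ t, u ∈ bag t
  cover_e : ∀ {u w : G.V}, G.adj u w → ∃ t, u ∈ bag t ∧ w ∈ bag t
  subtree : ∀ u : G.V, T.ConnectedIn {t | u ∈ bag t}

/-- Tree-width: minimum over tree decompositions of (maximum bag size − 1). -/
noncomputable def treewidth {p : ℕ} (G : LGraph p) : ℕ :=
  sInf {w | ∃ D : TreeDecomp p G, ∀ t, Nat.card (D.bag t) ≤ w + 1}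
/-! ### Special graphs: cycles, disjoint unions, grids (all labels empty) -/

/-- The cycle graph `C_n` (for `n ≥ 3`), with empty node labels. -/
def cycleGraph (p n : ℕ) : LGraph p where
  V := Fin n
  fintypeV := inferInstance
  decEqV := inferInstance
  adj i j := i ≠ j ∧ ((i.val + 1) % n = j.val ∨ (j.val + 1) % n = i.val)
  symm h := ⟨h.1.symm, h.2.symm⟩
  irrefl _ h := h.1 rfl
  lab _ _ := False

/-- Disjoint union of two graphs. -/
def LGraph.disjUnion {p : ℕ} (G1 G2 : LGraph p) : LGraph p where
  V := G1.V ⊕ G2.V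
  fintypeV := inferInstance
  decEqV := inferInstance
  adj a b :=
    match a, b with
    | .inl x, .inl y => G1.adj x y
    | .inr x, .inr y => G2.adj x y
    | _, _ => False
  symm {a b} h := by
    cases a <;> cases b <;> simp_all <;> first | exact G1.symm h | exact G2.symm h
  irrefl a h := by
    cases a
    · exact G1.irrefl _ h
    · exact G2.irrefl _ h
  lab a i :=
    match a with
    | .inl x => G1.lab x i
    | .inr x => G2.lab x i

/-- The `n × 2` grid graph, with empty node labels. -/
def gridGraph (p n : ℕ) : LGraph p where
  V := Fin n × Fin 2
  fintypeV := inferInstance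
  decEqV := inferInstance
  adj a b := (a.2 = b.2 ∧ (a.1.val + 1 = b.1.val ∨ b.1.val + 1 = a.1.val)) ∨
    (a.1 = b.1 ∧ a.2 ≠ b.2)
  symm h := by
    rcases h with ⟨h1, h2⟩ | ⟨h1, h2⟩
    · exact Or.inl ⟨h1.symm, h2.symm⟩
    · exact Or.inr ⟨h1.symm, h2.symm⟩
  irrefl a h := by
    rcases h with ⟨_, h2 | h2⟩ | ⟨_, h2⟩
    · omega
    · omega
    · exact h2 rfl
  lab _ _ := False
/-! ### The witness graphs of Rattan–Seppelt: a central 4-cycle with attached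
triangles and 6-cycles. -/

/-- Vertex type: 4 square nodes, 4 triangles (3 nodes each), 4 hexagons
(6 nodes each). -/
abbrev RSV : Type := Fin 4 ⊕ (Fin 4 × Fin 3) ⊕ (Fin 4 × Fin 6)

/-- Adjacency, parameterized by the owner (square corner) of each triangle and
of each hexagon: the square is a 4-cycle; each triangle/hexagon is complete to
its owner; triangles are 3-cycles, hexagons are 6-cycles. -/
def rsAdj (tO hO : Fin 4 → Fin 4) : RSV → RSV → Prop
  | .inl a, .inl b => a ≠ b ∧ ((a.val + 1) % 4 = b.val ∨ (b.val + 1) % 4 = a.val)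
  | .inl a, .inr (.inl (t, _)) => a = tO t
  | .inr (.inl (t, _)), .inl a => a = tO t
  | .inl a, .inr (.inr (s, _)) => a = hO s
  | .inr (.inr (s, _)), .inl a => a = hO s
  | .inr (.inl (t, i)), .inr (.inl (t', i')) => t = t' ∧ i ≠ i'
  | .inr (.inr (s, j)), .inr (.inr (s', j')) =>
      s = s' ∧ ((j.val + 1) % 6 = j'.val ∨ (j'.val + 1) % 6 = j.val)
  | _, _ => False

def rsGraph (p : ℕ) (tO hO : Fin 4 → Fin 4) : LGraph p where
  V := RSV
  fintypeV := inferInstance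
  decEqV := inferInstance
  adj := rsAdj tO hO
  symm {u v} h := by
    rcases u with a | ⟨t, i⟩ | ⟨s, j⟩ <;> rcases v with b | ⟨t', i'⟩ | ⟨s', j'⟩ <;>
      simp only [rsAdj] at h ⊢ <;> tauto
  irrefl u h := by
    rcases u with a | ⟨t, i⟩ | ⟨s, j⟩ <;> simp only [rsAdj] at h <;> omega
  lab _ _ := False

/-- `G`: triangles attached to `u₁` (index 0) and `u₄` (index 3), hexagons to
`u₂` (index 1) and `u₃` (index 2). -/
def rsG (p : ℕ) : LGraph p :=
  rsGraph p (fun t => if t.val < 2 then 0 else 3) (fun s => if s.val < 2 then 1 else 2)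

/-- `G'`: triangles attached to the opposite corners `u₁` (index 0) and `u₃`
(index 2), hexagons to `u₂` (index 1) and `u₄` (index 3). -/
def rsG' (p : ℕ) : LGraph p :=
  rsGraph p (fun t => if t.val < 2 then 0 else 2) (fun s => if s.val < 2 then 1 else 3)
/-! ### Graph-level separation by node classifiers -/

/-- `G ≡_{GNN} G'`: for every GNN node classifier, the multisets of classifier
values over all nodes coincide. -/
noncomputable def gnnGraphEquiv (p : ℕ) (G G' : LGraph p) : Prop :=
  ∀ A : GNN p 1, Finset.univ.val.map (A.cls G) = Finset.univ.val.map (A.cls G')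

/-- `G ≡_{HE-GNN-(d)} G'`: for every HE-GNN node classifier of nesting depth
`d`, the multisets of classifier values over all nodes coincide. -/
noncomputable def hegnnGraphEquiv (p d : ℕ) (G G' : LGraph p) : Prop :=
  ∀ A : HEGNN d p 1, Finset.univ.val.map (A.cls G) = Finset.univ.val.map (A.cls G')

/-- The eccentricity of `u` in `G`: the maximal distance from `u` to any node. -/
noncomputable def LGraph.eccFrom {p : ℕ} (G : LGraph p) (u : G.V) : ℕ :=
  Finset.univ.sup (fun w => sInf {r | G.within u r w})


/-! ### Auxiliary development for Statement 8 -/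

noncomputable section Aux

/-- Rooted unfolding colors: `MTree α k` is the type of depth-`k` WL colors over
base colors in `α`. -/
def MTree (α : Type) : ℕ → Type
  | 0 => α
  | k+1 => MTree α k × Multiset (MTree α k)

/-- The depth-`k` unfolding color of a node. -/
def mcol {p : ℕ} (G : LGraph p) {α : Type} (e : G.V → α) : (k : ℕ) → G.V → MTree α k
  | 0, u => e u
  | k+1, u => (mcol G e k u, (G.nbrFinset u).val.map (mcol G e k))

theorem mcol_fst {p : ℕ} (G : LGraph p) {α : Type} (e : G.V → α) (k : ℕ) (u : G.V) :
    (mcol G e (k+1) u).1 = mcol G e k u := rfl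

theorem mcol_mono {p q : ℕ} {G1 : LGraph p} {G2 : LGraph q} {α : Type}
    {e1 : G1.V → α} {e2 : G2.V → α} {u : G1.V} {y : G2.V} {a b : ℕ} (hab : a ≤ b)
    (h : mcol G1 e1 b u = mcol G2 e2 b y) : mcol G1 e1 a u = mcol G2 e2 a y := by
  obtain ⟨c, rfl⟩ := Nat.le.dest hab
  clear hab
  induction c with
  | zero => exact h
  | succ c ih => exact ih (congrArg Prod.fst h)

/-- Functorial map on unfolding colors. -/
def MTree.map {α β : Type} (h : α → β) : ∀ {k : ℕ}, MTree α k → MTree β k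
  | 0, t => h t
  | _+1, t => (t.1.map h, t.2.map (fun s => s.map h))

theorem MTree.map_injective {α β : Type} {h : α → β} (hinj : Function.Injective h) :
    ∀ {k : ℕ}, Function.Injective (MTree.map h (k := k))
  | 0 => hinj
  | k+1 => by
    rintro ⟨a1, m1⟩ ⟨a2, m2⟩ he
    have h1 := congrArg Prod.fst he
    have h2 := congrArg Prod.snd he
    simp only [MTree.map] at h1 h2
    have := MTree.map_injective hinj (k := k)
    exact Prod.ext (this h1) (Multiset.map_injective this h2)

theorem mcol_map {p : ℕ} (G : LGraph p) {α β : Type} (e : G.V → α) (h : α → β) :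
    ∀ (k : ℕ) (u : G.V), mcol G (fun x => h (e x)) k u = MTree.map h (mcol G e k u)
  | 0, u => rfl
  | k+1, u => by
    simp only [mcol, MTree.map, Multiset.map_map]
    exact Prod.ext (mcol_map G e h k u) (Multiset.map_congr rfl fun x _ => mcol_map G e h k x)

/-- The root (level-0) color of an unfolding color. -/
def MTree.root {α : Type} : ∀ {k : ℕ}, MTree α k → α
  | 0, t => t
  | _+1, t => t.1.root

theorem mcol_root {p : ℕ} (G : LGraph p) {α : Type} (e : G.V → α) :
    ∀ (k : ℕ) (u : G.V), (mcol G e k u).root = e u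
  | 0, _ => rfl
  | k+1, u => mcol_root G e k u

/-! #### Cardinality facts and injective encodings -/

open Cardinal in
theorem emb_real_of_card {α : Type} (h : #α ≤ Cardinal.continuum) :
    ∃ f : α → ℝ, Function.Injective f := by
  have h2 : #α ≤ #ℝ := by rw [Cardinal.mk_real]; exact h
  obtain ⟨f⟩ := (Cardinal.le_def α ℝ).1 h2
  exact ⟨f, f.injective⟩

open Cardinal in
theorem card_multiset_le {α : Type} (h : #α ≤ 𝔠) : #(Multiset α) ≤ 𝔠 := by
  refine le_trans (Cardinal.mk_le_of_surjective
    (f := ((↑) : List α → Multiset α)) (fun q => Quot.exists_rep q)) ?_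
  exact le_trans (Cardinal.mk_list_le_max α) (max_le Cardinal.aleph0_le_continuum h)

open Cardinal in
theorem card_prod_le {α β : Type} (h1 : #α ≤ 𝔠) (h2 : #β ≤ 𝔠) : #(α × β) ≤ 𝔠 := by
  have : #(α × β) = #α * #β := by simp [Cardinal.mk_prod]
  rw [this]
  calc #α * #β ≤ 𝔠 * 𝔠 := mul_le_mul' h1 h2
    _ = 𝔠 := Cardinal.continuum_mul_self

open Cardinal in
theorem card_fun_real_le (D : ℕ) : #(Fin D → ℝ) ≤ 𝔠 := by
  have : #(Fin D → ℝ) = #ℝ ^ #(Fin D) := (Cardinal.power_def ℝ (Fin D)).symm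
  rw [this, Cardinal.mk_real, Cardinal.mk_fin]
  exact Cardinal.power_nat_le Cardinal.aleph0_le_continuum

open Cardinal in
theorem card_mtree_le {α : Type} (h : #α ≤ 𝔠) : ∀ k, #(MTree α k) ≤ 𝔠
  | 0 => h
  | k+1 => card_prod_le (card_mtree_le h k) (card_multiset_le (card_mtree_le h k))

/-! #### Appending a layer to a GNN -/

def GNN.snoc : {D Dm : ℕ} → GNN D Dm → {D' : ℕ} → GNNLayer Dm D' → GNN D D'
  | _, _, .last l, _, l' => .cons l (.last l')
  | _, _, .cons l rest, _, l' => .cons l (rest.snoc l')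

theorem GNN.run_snoc {p : ℕ} : ∀ {D Dm D' : ℕ} (A : GNN D Dm) (l : GNNLayer Dm D')
    (G : LGraph p) (emb : G.V → Fin D → ℝ),
    (A.snoc l).run G emb = l.apply G (A.run G emb)
  | _, _, _, .last l0, l, G, emb => rfl
  | _, _, _, .cons l0 rest, l, G, emb => run_snoc rest l G (l0.apply G emb)

theorem fin_append_zero {a b : Fin 1 → ℝ} : Fin.append a b 0 = a 0 :=
  Fin.append_left a b 0

theorem fin_append_one {a b : Fin 1 → ℝ} : Fin.append a b 1 = b 0 :=
  Fin.append_right a b 0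

/-- A GNN with `k+1` layers can injectively encode the depth-`k` unfolding
color of every node into a single real number. -/
theorem gnn_encode (D k : ℕ) :
    ∃ (A : GNN D 1) (ι : MTree (Fin D → ℝ) k → ℝ), Function.Injective ι ∧
      ∀ {p : ℕ} (G : LGraph p) (e : G.V → Fin D → ℝ) (u : G.V),
        A.run G e u = fun _ => ι (mcol G e k u) := by
  induction k with
  | zero =>
    obtain ⟨f, hf⟩ := emb_real_of_card (card_fun_real_le D)
    refine ⟨.last ⟨fun _ _ => 0, fun x _ => f (fun i => x (Fin.castAdd D i))⟩, f, hf, ?_⟩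
    intro p G e u
    funext j
    show f (fun i => Fin.append (e u) _ (Fin.castAdd D i)) = f (mcol G e 0 u)
    congr 1
    funext i
    rw [Fin.append_left]
    rfl
  | succ k ih =>
    obtain ⟨A, ι, hι, hA⟩ := ih
    obtain ⟨eM, heM⟩ := emb_real_of_card (card_multiset_le (le_of_eq Cardinal.mk_real))
    obtain ⟨eP, heP⟩ := emb_real_of_card (card_prod_le (le_of_eq Cardinal.mk_real)
      (le_of_eq Cardinal.mk_real))
    refine ⟨A.snoc ⟨fun M _ => eM (M.map (fun x => x 0)), fun x _ => eP (x 0, x 1)⟩,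
      fun t => eP (ι t.1, eM (t.2.map ι)), ?_, ?_⟩
    · rintro ⟨a1, m1⟩ ⟨a2, m2⟩ he
      have := heP he
      have h1 : ι a1 = ι a2 := congrArg Prod.fst this
      have h2 : eM (m1.map ι) = eM (m2.map ι) := congrArg Prod.snd this
      exact Prod.ext (hι h1) (Multiset.map_injective hι (heM h2))
    · intro p G e u
      rw [GNN.run_snoc]
      funext j
      show eP (Fin.append (A.run G e u) _ 0, Fin.append (A.run G e u)
        ((fun M (_ : Fin 1) => eM (M.map (fun x => x 0))) ((G.nbrFinset u).val.map (A.run G e))) 1)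
        = eP (ι (mcol G e (k+1) u).1, eM ((mcol G e (k+1) u).2.map ι))
      have h1 : (A.run G e u) 0 = ι (mcol G e k u) := by rw [hA]
      have h2 : (((G.nbrFinset u).val.map (A.run G e)).map (fun x => x 0))
          = ((G.nbrFinset u).val.map (mcol G e k)).map ι := by
        rw [Multiset.map_map, Multiset.map_map]
        refine Multiset.map_congr rfl fun x _ => ?_
        show (A.run G e x) 0 = ι (mcol G e k x)
        rw [hA]
      rw [fin_append_zero, fin_append_one]
      show eP ((A.run G e u) 0,
          eM (((G.nbrFinset u).val.map (A.run G e)).map (fun x => x 0))) = _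
      rw [h1, h2]
      rfl

/-- GNNs can compute arbitrary functions of the depth-`k` unfolding color. -/
theorem gnn_univ (D D' k : ℕ) (f : MTree (Fin D → ℝ) k → (Fin D' → ℝ)) :
    ∃ A : GNN D D', ∀ {p : ℕ} (G : LGraph p) (e : G.V → Fin D → ℝ) (u : G.V),
      A.run G e u = f (mcol G e k u) := by
  obtain ⟨A, ι, hι, hA⟩ := gnn_encode D k
  set g : ℝ → Fin D' → ℝ :=
    fun r => if h : ∃ c, ι c = r then f h.choose else fun _ => 0 with hg
  have hgι : ∀ c, g (ι c) = f c := by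
    intro c
    have hex : ∃ c', ι c' = ι c := ⟨c, rfl⟩
    rw [hg]
    simp only [dif_pos hex]
    rw [hι hex.choose_spec]
  refine ⟨A.snoc ⟨fun _ _ => 0, fun x => g (x 0)⟩, ?_⟩
  intro p G e u
  rw [GNN.run_snoc]
  show g (Fin.append (A.run G e u) _ 0) = f (mcol G e k u)
  rw [fin_append_zero, hA, hgι]

/-! #### Nested invariants and universality of HE-GNNs -/

/-- The value type of depth-`d` nested invariants (`K` rounds per level). -/
def NT (K : ℕ) : ℕ → ℕ → Type
  | 0, D => MTree (Fin D → ℝ) K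
  | d+1, D => MTree ((Fin D → ℝ) × NT K d (D+1)) K

open Cardinal in
theorem card_nt_le (K : ℕ) : ∀ (d D : ℕ), #(NT K d D) ≤ 𝔠
  | 0, D => card_mtree_le (card_fun_real_le D) K
  | d+1, D => card_mtree_le (card_prod_le (card_fun_real_le D) (card_nt_le K d (D+1))) K

/-- The depth-`d` nested invariant of a node: the maximal information computed
by a HE-GNN of nesting depth `d` with `K` rounds per level. -/
def nval (K : ℕ) {p : ℕ} : (d : ℕ) → (D : ℕ) → (G : LGraph p) →
    (G.V → Fin D → ℝ) → G.V → NT K d D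
  | 0, _, G, e, v => mcol G e K v
  | d+1, D, G, e, v => mcol G (fun u => (e u, nval K d (D+1) G
      (fun w => Fin.append (e w) (fun _ => if w = u then (1:ℝ) else 0)) u)) K v

/-- HE-GNNs can compute arbitrary functions of the depth-`d` nested invariant. -/
theorem hegnn_univ (K : ℕ) : ∀ (d D D' : ℕ) (f : NT K d D → (Fin D' → ℝ)),
    ∃ A : HEGNN d D D', ∀ {p : ℕ} (G : LGraph p) (e : G.V → Fin D → ℝ) (u : G.V),
      A.run G e u = f (nval K d D G e u) := by
  intro d
  induction d with
  | zero =>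
    intro D D' f
    obtain ⟨A, hA⟩ := gnn_univ D D' K f
    exact ⟨.base A, fun G e u => hA G e u⟩
  | succ d ih =>
    intro D D' f
    obtain ⟨ιd, hιd⟩ := emb_real_of_card (card_nt_le K d (D+1))
    obtain ⟨B, hB⟩ := ih (D+1) 1 (fun t _ => ιd t)
    set J : ((Fin D → ℝ) × NT K d (D+1)) → (Fin (D+1) → ℝ) :=
      fun z => Fin.append z.1 (fun _ => ιd z.2) with hJ
    have hJinj : Function.Injective J := by
      rintro ⟨a1, t1⟩ ⟨a2, t2⟩ he
      simp only [hJ] at he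
      refine Prod.ext ?_ ?_
      · show a1 = a2
        funext i
        have := congrFun he (Fin.castAdd 1 i)
        rwa [Fin.append_left, Fin.append_left] at this
      · show t1 = t2
        have := congrFun he (Fin.natAdd D 0)
        rw [Fin.append_right, Fin.append_right] at this
        exact hιd this
    set fC : MTree (Fin (D+1) → ℝ) K → Fin D' → ℝ :=
      fun s => if h : ∃ t, MTree.map J t = s then f h.choose else fun _ => 0 with hfC
    have hfCJ : ∀ t, fC (MTree.map J t) = f t := by
      intro t
      have hex : ∃ t', MTree.map J t' = MTree.map J t := ⟨t, rfl⟩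
      rw [hfC]
      simp only [dif_pos hex]
      rw [MTree.map_injective hJinj hex.choose_spec]
    obtain ⟨C, hC⟩ := gnn_univ (D+1) D' K fC
    refine ⟨.nest B C, ?_⟩
    intro p G e u
    show C.run G (fun v => Fin.append (e v) (B.run G
      (fun w => Fin.append (e w) (fun _ => if w = v then (1:ℝ) else 0)) v)) u = _
    have hemb : (fun v => Fin.append (e v) (B.run G
        (fun w => Fin.append (e w) (fun _ => if w = v then (1:ℝ) else 0)) v))
        = fun v => J (e v, nval K d (D+1) G
            (fun w => Fin.append (e w) (fun _ => if w = v then (1:ℝ) else 0)) v) := by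
      funext v
      rw [hB]
    rw [hemb, hC, mcol_map]
    show fC (MTree.map J (nval K (d+1) D G e u)) = f (nval K (d+1) D G e u)
    exact hfCJ _

/-! #### Walk counts -/

theorem mem_nbrFinset {p : ℕ} (G : LGraph p) (u x : G.V) :
    x ∈ G.nbrFinset u ↔ G.adj u x := by
  simp [LGraph.nbrFinset]

/-- The number of walks of length `k` from `u` to `x`. -/
def wkc {p : ℕ} (G : LGraph p) : ℕ → G.V → G.V → ℕ
  | 0, u, x => if u = x then 1 else 0
  | k+1, u, x => ∑ y ∈ G.nbrFinset u, wkc G k y x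

theorem wkc_succ_right {p : ℕ} (G : LGraph p) : ∀ (k : ℕ) (u x : G.V),
    wkc G (k+1) u x = ∑ z ∈ G.nbrFinset x, wkc G k u z
  | 0, u, x => by
    show (∑ y ∈ G.nbrFinset u, if y = x then 1 else 0)
      = ∑ z ∈ G.nbrFinset x, if u = z then 1 else 0
    rw [Finset.sum_ite_eq' (G.nbrFinset u) x (fun _ => 1),
      Finset.sum_ite_eq (G.nbrFinset x) u (fun _ => 1)]
    refine if_congr ?_ rfl rfl
    simp only [mem_nbrFinset]
    exact ⟨fun h => G.symm h, fun h => G.symm h⟩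
  | k+1, u, x => by
    show (∑ y ∈ G.nbrFinset u, wkc G (k+1) y x) = ∑ z ∈ G.nbrFinset x, wkc G (k+1) u z
    calc (∑ y ∈ G.nbrFinset u, wkc G (k+1) y x)
        = ∑ y ∈ G.nbrFinset u, ∑ z ∈ G.nbrFinset x, wkc G k y z :=
          Finset.sum_congr rfl fun y _ => wkc_succ_right G k y x
      _ = ∑ z ∈ G.nbrFinset x, ∑ y ∈ G.nbrFinset u, wkc G k y z := Finset.sum_comm
      _ = _ := rfl

theorem wkc_symm {p : ℕ} (G : LGraph p) : ∀ (k : ℕ) (u x : G.V), wkc G k u x = wkc G k x u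
  | 0, u, x => by
    show (if u = x then 1 else 0) = if x = u then 1 else 0
    simp [eq_comm]
  | k+1, u, x => by
    rw [wkc_succ_right G k x u]
    show (∑ y ∈ G.nbrFinset u, wkc G k y x) = ∑ y ∈ G.nbrFinset u, wkc G k x y
    exact Finset.sum_congr rfl fun y _ => wkc_symm G k y x

theorem wkc_pos_of_within {p : ℕ} (G : LGraph p) :
    ∀ (r : ℕ) (a b : G.V), G.within a r b → ∃ k, 0 < wkc G k b a
  | 0, a, b, h => ⟨0, by rw [h]; show 0 < wkc G 0 a a; simp [wkc]⟩
  | r+1, a, b, h => by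
    rcases h with h | ⟨w, hw, hadj⟩
    · exact wkc_pos_of_within G r a b h
    · obtain ⟨k, hk⟩ := wkc_pos_of_within G r a w hw
      refine ⟨k+1, ?_⟩
      show 0 < ∑ y ∈ G.nbrFinset b, wkc G k y a
      refine Finset.sum_pos' (fun i _ => Nat.zero_le _) ⟨w, ?_, hk⟩
      rw [mem_nbrFinset]
      exact G.symm hadj

/-! #### The disjoint union: colors and walks -/

theorem nbr_disjUnion_inl {p : ℕ} (G1 G2 : LGraph p) (u : G1.V) :
    (G1.disjUnion G2).nbrFinset (Sum.inl u) =
      (G1.nbrFinset u).map ⟨Sum.inl, Sum.inl_injective⟩ := by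
  ext x
  cases x with
  | inl y =>
    refine (mem_nbrFinset (G1.disjUnion G2) _ _).trans ?_
    show _ ↔ (Sum.inl y : G1.V ⊕ G2.V) ∈ (G1.nbrFinset u).map ⟨Sum.inl, Sum.inl_injective⟩
    simp only [mem_nbrFinset, Finset.mem_map, Function.Embedding.coeFn_mk]
    constructor
    · intro h; exact ⟨y, h, rfl⟩
    · rintro ⟨z, hz, hzz⟩
      cases hzz
      exact hz
  | inr y =>
    refine (mem_nbrFinset (G1.disjUnion G2) _ _).trans ?_
    show _ ↔ (Sum.inr y : G1.V ⊕ G2.V) ∈ (G1.nbrFinset u).map ⟨Sum.inl, Sum.inl_injective⟩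
    simp only [mem_nbrFinset, Finset.mem_map, Function.Embedding.coeFn_mk]
    constructor
    · intro h; exact absurd h (by exact fun h => h)
    · rintro ⟨z, _, hzz⟩; cases hzz

theorem nbr_disjUnion_inr {p : ℕ} (G1 G2 : LGraph p) (u : G2.V) :
    (G1.disjUnion G2).nbrFinset (Sum.inr u) =
      (G2.nbrFinset u).map ⟨Sum.inr, Sum.inr_injective⟩ := by
  ext x
  cases x with
  | inl y =>
    refine (mem_nbrFinset (G1.disjUnion G2) _ _).trans ?_
    show _ ↔ (Sum.inl y : G1.V ⊕ G2.V) ∈ (G2.nbrFinset u).map ⟨Sum.inr, Sum.inr_injective⟩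
    simp only [mem_nbrFinset, Finset.mem_map, Function.Embedding.coeFn_mk]
    constructor
    · intro h; exact absurd h (by exact fun h => h)
    · rintro ⟨z, _, hzz⟩; cases hzz
  | inr y =>
    refine (mem_nbrFinset (G1.disjUnion G2) _ _).trans ?_
    show _ ↔ (Sum.inr y : G1.V ⊕ G2.V) ∈ (G2.nbrFinset u).map ⟨Sum.inr, Sum.inr_injective⟩
    simp only [mem_nbrFinset, Finset.mem_map, Function.Embedding.coeFn_mk]
    constructor
    · intro h; exact ⟨y, h, rfl⟩
    · rintro ⟨z, hz, hzz⟩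
      cases hzz
      exact hz

theorem mcol_disjUnion_inl {p : ℕ} (G1 G2 : LGraph p) {α : Type}
    (e1 : G1.V → α) (e2 : G2.V → α) :
    ∀ (k : ℕ) (u : G1.V),
      mcol (G1.disjUnion G2) (Sum.elim e1 e2) k (Sum.inl u) = mcol G1 e1 k u
  | 0, u => rfl
  | k+1, u => by
    refine Prod.ext (mcol_disjUnion_inl G1 G2 e1 e2 k u) ?_
    show ((G1.disjUnion G2).nbrFinset (Sum.inl u)).val.map
        (mcol (G1.disjUnion G2) (Sum.elim e1 e2) k)
      = (G1.nbrFinset u).val.map (mcol G1 e1 k)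
    erw [nbr_disjUnion_inl, Finset.map_val, Multiset.map_map]
    exact Multiset.map_congr rfl fun x _ => mcol_disjUnion_inl G1 G2 e1 e2 k x

theorem mcol_disjUnion_inr {p : ℕ} (G1 G2 : LGraph p) {α : Type}
    (e1 : G1.V → α) (e2 : G2.V → α) :
    ∀ (k : ℕ) (u : G2.V),
      mcol (G1.disjUnion G2) (Sum.elim e1 e2) k (Sum.inr u) = mcol G2 e2 k u
  | 0, u => rfl
  | k+1, u => by
    refine Prod.ext (mcol_disjUnion_inr G1 G2 e1 e2 k u) ?_
    show ((G1.disjUnion G2).nbrFinset (Sum.inr u)).val.map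
        (mcol (G1.disjUnion G2) (Sum.elim e1 e2) k)
      = (G2.nbrFinset u).val.map (mcol G2 e2 k)
    erw [nbr_disjUnion_inr, Finset.map_val, Multiset.map_map]
    exact Multiset.map_congr rfl fun x _ => mcol_disjUnion_inr G1 G2 e1 e2 k x

theorem wkc_disjUnion_inl_inl {p : ℕ} (G1 G2 : LGraph p) :
    ∀ (k : ℕ) (u x : G1.V),
      wkc (G1.disjUnion G2) k (Sum.inl u) (Sum.inl x) = wkc G1 k u x
  | 0, u, x => by
    show (if Sum.inl u = Sum.inl x then 1 else 0) = if u = x then 1 else 0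
    simp
  | k+1, u, x => by
    show (∑ y ∈ (G1.disjUnion G2).nbrFinset (Sum.inl u),
        wkc (G1.disjUnion G2) k y (Sum.inl x)) = ∑ y ∈ G1.nbrFinset u, wkc G1 k y x
    erw [nbr_disjUnion_inl, Finset.sum_map]
    exact Finset.sum_congr rfl fun y _ => wkc_disjUnion_inl_inl G1 G2 k y x

theorem wkc_disjUnion_inl_inr {p : ℕ} (G1 G2 : LGraph p) :
    ∀ (k : ℕ) (u : G1.V) (x : G2.V),
      wkc (G1.disjUnion G2) k (Sum.inl u) (Sum.inr x) = 0
  | 0, u, x => by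
    show (if (Sum.inl u : G1.V ⊕ G2.V) = Sum.inr x then 1 else 0) = 0
    simp
  | k+1, u, x => by
    show (∑ y ∈ (G1.disjUnion G2).nbrFinset (Sum.inl u),
        wkc (G1.disjUnion G2) k y (Sum.inr x)) = 0
    erw [nbr_disjUnion_inl, Finset.sum_map]
    exact Finset.sum_eq_zero fun y _ => wkc_disjUnion_inl_inr G1 G2 k y x

theorem wkc_disjUnion_inr_inr {p : ℕ} (G1 G2 : LGraph p) :
    ∀ (k : ℕ) (u x : G2.V),
      wkc (G1.disjUnion G2) k (Sum.inr u) (Sum.inr x) = wkc G2 k u x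
  | 0, u, x => by
    show (if Sum.inr u = Sum.inr x then 1 else 0) = if u = x then 1 else 0
    simp
  | k+1, u, x => by
    show (∑ y ∈ (G1.disjUnion G2).nbrFinset (Sum.inr u),
        wkc (G1.disjUnion G2) k y (Sum.inr x)) = ∑ y ∈ G2.nbrFinset u, wkc G2 k y x
    erw [nbr_disjUnion_inr, Finset.sum_map]
    exact Finset.sum_congr rfl fun y _ => wkc_disjUnion_inr_inr G1 G2 k y x

theorem wkc_disjUnion_inr_inl {p : ℕ} (G1 G2 : LGraph p) :
    ∀ (k : ℕ) (u : G2.V) (x : G1.V),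
      wkc (G1.disjUnion G2) k (Sum.inr u) (Sum.inl x) = 0
  | 0, u, x => by
    show (if (Sum.inr u : G1.V ⊕ G2.V) = Sum.inl x then 1 else 0) = 0
    simp
  | k+1, u, x => by
    show (∑ y ∈ (G1.disjUnion G2).nbrFinset (Sum.inr u),
        wkc (G1.disjUnion G2) k y (Sum.inl x)) = 0
    erw [nbr_disjUnion_inr, Finset.sum_map]
    exact Finset.sum_eq_zero fun y _ => wkc_disjUnion_inr_inl G1 G2 k y x

/-! #### Choice-based factoring -/

theorem exists_factor {β γ δ : Type} [Nonempty δ] (f : β → γ) (g : β → δ)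
    (h : ∀ x y, f x = f y → g x = g y) : ∃ ψ : γ → δ, ∀ x, g x = ψ (f x) := by
  refine ⟨fun t => if h' : ∃ x, f x = t then g h'.choose else Classical.arbitrary δ,
    fun x => ?_⟩
  have hex : ∃ x', f x' = f x := ⟨x, rfl⟩
  simp only [dif_pos hex]
  exact (h _ _ hex.choose_spec).symm

/-! #### Stabilization of the refinement partition -/

section Stab

variable {p : ℕ} (U : LGraph p) {α : Type} (e : U.V → α)

/-- The partition by depth-`m` colors is stable. -/
def StabAt (m : ℕ) : Prop :=
  ∀ x y : U.V, mcol U e m x = mcol U e m y → mcol U e (m+1) x = mcol U e (m+1) y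

theorem stabAt_succ (hne : Nonempty U.V) (m : ℕ) (h : StabAt U e m) :
    StabAt U e (m+1) := by
  intro x y hxy
  haveI : Nonempty (MTree α (m+1)) := ⟨mcol U e (m+1) (Classical.choice hne)⟩
  obtain ⟨ψ, hψ⟩ := exists_factor (mcol U e m) (mcol U e (m+1)) h
  refine Prod.ext hxy ?_
  show ((U.nbrFinset x).val.map (mcol U e (m+1)))
    = ((U.nbrFinset y).val.map (mcol U e (m+1)))
  have h2 : ((U.nbrFinset x).val.map (mcol U e m))
      = ((U.nbrFinset y).val.map (mcol U e m)) := congrArg Prod.snd hxy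
  calc (U.nbrFinset x).val.map (mcol U e (m+1))
      = ((U.nbrFinset x).val.map (mcol U e m)).map ψ := by
        rw [Multiset.map_map]; exact Multiset.map_congr rfl fun z _ => hψ z
    _ = ((U.nbrFinset y).val.map (mcol U e m)).map ψ := by rw [h2]
    _ = (U.nbrFinset y).val.map (mcol U e (m+1)) := by
        rw [Multiset.map_map]; exact Multiset.map_congr rfl fun z _ => (hψ z).symm

theorem stab_helper {β γ δ : Type} [Fintype β] [DecidableEq γ] [DecidableEq (γ × δ)]
    (F : β → γ × δ)
    (h : (Finset.univ.image F).card ≤ (Finset.univ.image (fun b => (F b).1)).card)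
    (x y : β) (hxy : (F x).1 = (F y).1) : F x = F y := by
  have him : (Finset.univ.image (fun b => (F b).1))
      = (Finset.univ.image F).image Prod.fst := by
    rw [Finset.image_image]
    rfl
  have hinj : Set.InjOn Prod.fst ((Finset.univ.image F : Finset (γ × δ)) : Set (γ × δ)) := by
    refine Finset.injOn_of_card_image_eq (le_antisymm Finset.card_image_le ?_)
    rw [← him]
    exact h
  exact hinj (Finset.mem_coe.2 (Finset.mem_image_of_mem F (Finset.mem_univ x)))
    (Finset.mem_coe.2 (Finset.mem_image_of_mem F (Finset.mem_univ y))) hxy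

theorem stabAt_of_card (m : ℕ)
    (h : (Finset.univ.image (mcol U e (m+1))).card ≤ (Finset.univ.image (mcol U e m)).card) :
    StabAt U e m :=
  fun x y hxy =>
    @stab_helper U.V (MTree α m) (Multiset (MTree α m)) _
      (fun a b => propDecidable (a = b)) (fun a b => propDecidable (a = b))
      (mcol U e (m+1)) h x y hxy

theorem stabAt_exists (hne : Nonempty U.V) :
    ∃ m0, m0 ≤ Fintype.card U.V ∧ StabAt U e m0 := by
  by_contra hcon
  push_neg at hcon
  have hgrow : ∀ m, m ≤ Fintype.card U.V → m + 1 ≤ (Finset.univ.image (mcol U e m)).card := by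
    intro m
    induction m with
    | zero =>
      intro _
      have : (Finset.univ.image (mcol U e 0)).Nonempty :=
        ⟨mcol U e 0 (Classical.choice hne), Finset.mem_image_of_mem _ (Finset.mem_univ _)⟩
      exact Finset.card_pos.2 this
    | succ m ih =>
      intro hm
      have h1 := ih (le_of_lt (Nat.lt_of_succ_le hm))
      have h2 : ¬ StabAt U e m := hcon m (le_of_lt (Nat.lt_of_succ_le hm))
      have h3 : ¬ ((Finset.univ.image (mcol U e (m+1))).card ≤ (Finset.univ.image (mcol U e m)).card) :=
        fun hle => h2 (stabAt_of_card U e m hle)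
      omega
  have h4 := hgrow (Fintype.card U.V) le_rfl
  have h5 : (Finset.univ.image (mcol U e (Fintype.card U.V))).card ≤ Fintype.card U.V := by
    calc (Finset.univ.image (mcol U e (Fintype.card U.V))).card
        ≤ (Finset.univ : Finset U.V).card := Finset.card_image_le
      _ = Fintype.card U.V := Finset.card_univ
  omega

/-- After `card U.V` rounds the partition determines the colors at every round. -/
theorem stable_all (hne : Nonempty U.V) (x y : U.V)
    (h : mcol U e (Fintype.card U.V) x = mcol U e (Fintype.card U.V) y) :
    ∀ j, mcol U e j x = mcol U e j y := by
  obtain ⟨m0, hm0le, hm0⟩ := stabAt_exists U e hne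
  have hall : ∀ m, m0 ≤ m → StabAt U e m := by
    intro m hm
    obtain ⟨c, rfl⟩ := Nat.le.dest hm
    clear hm
    induction c with
    | zero => exact hm0
    | succ c ih => exact stabAt_succ U e hne _ ih
  have hup : ∀ i, mcol U e (Fintype.card U.V + i) x = mcol U e (Fintype.card U.V + i) y := by
    intro i
    induction i with
    | zero => exact h
    | succ i ih =>
      exact hall (Fintype.card U.V + i) (le_trans hm0le (Nat.le_add_right _ _)) x y ih
  intro j
  rcases le_total j (Fintype.card U.V) with hj | hj
  · exact mcol_mono hj h
  · obtain ⟨i, rfl⟩ := Nat.le.dest hj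
    exact hup i

end Stab

/-! #### Walks into color classes -/

section AFun

variable {p : ℕ} (U : LGraph p) {α : Type} (e : U.V → α) (N : ℕ)

/-- The number of walks of length `k` from `x` into a level-`N` color class. -/
def aF : ℕ → U.V → MTree α N → ℕ
  | 0, x, t => if mcol U e N x = t then 1 else 0
  | k+1, x, t => ∑ y ∈ U.nbrFinset x, aF k y t

theorem aF_stable : ∀ (k : ℕ) (x y : U.V),
    mcol U e (N+k) x = mcol U e (N+k) y → aF U e N k x = aF U e N k y
  | 0, x, y, h => by
    funext t
    show (if mcol U e N x = t then 1 else 0) = if mcol U e N y = t then 1 else 0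
    rw [show mcol U e N x = mcol U e N y from h]
  | k+1, x, y, h => by
    haveI : Nonempty (MTree α N → ℕ) := ⟨fun _ => 0⟩
    obtain ⟨ψ, hψ⟩ := exists_factor (mcol U e (N+k)) (aF U e N k)
      (fun x y hxy => aF_stable k x y hxy)
    funext t
    have h2 : ((U.nbrFinset x).val.map (mcol U e (N+k)))
        = ((U.nbrFinset y).val.map (mcol U e (N+k))) := congrArg Prod.snd h
    show (∑ z ∈ U.nbrFinset x, aF U e N k z t) = ∑ z ∈ U.nbrFinset y, aF U e N k z t
    have key : ∀ w : U.V, (∑ z ∈ U.nbrFinset w, aF U e N k z t)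
        = (((U.nbrFinset w).val.map (mcol U e (N+k))).map (fun s => ψ s t)).sum := by
      intro w
      rw [Multiset.map_map]
      show ((U.nbrFinset w).val.map (fun z => aF U e N k z t)).sum = _
      congr 1
      exact Multiset.map_congr rfl fun z _ => by
        simp only [Function.comp]
        rw [hψ z]
    rw [key x, key y, h2]

theorem aF_walk : ∀ (k : ℕ) (x : U.V) (t : MTree α N),
    aF U e N k x t = ∑ z ∈ Finset.univ.filter (fun z => mcol U e N z = t), wkc U k x z
  | 0, x, t => by
    show (if mcol U e N x = t then 1 else 0)
      = ∑ z ∈ Finset.univ.filter (fun z => mcol U e N z = t), if x = z then 1 else 0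
    rw [Finset.sum_ite_eq (Finset.univ.filter (fun z => mcol U e N z = t)) x (fun _ => 1)]
    refine if_congr ?_ rfl rfl
    simp [Finset.mem_filter]
  | k+1, x, t => by
    show (∑ y ∈ U.nbrFinset x, aF U e N k y t) = _
    calc (∑ y ∈ U.nbrFinset x, aF U e N k y t)
        = ∑ y ∈ U.nbrFinset x, ∑ z ∈ Finset.univ.filter (fun z => mcol U e N z = t),
            wkc U k y z := Finset.sum_congr rfl fun y _ => aF_walk k y t
      _ = ∑ z ∈ Finset.univ.filter (fun z => mcol U e N z = t),
            ∑ y ∈ U.nbrFinset x, wkc U k y z := Finset.sum_comm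
      _ = _ := rfl

end AFun

/-! #### The core counting lemma -/

theorem sum_disjUnion_split {p : ℕ} (G1 G2 : LGraph p)
    (g : (G1.disjUnion G2).V → ℕ) :
    ∑ z : (G1.disjUnion G2).V, g z
      = (∑ u : G1.V, g (Sum.inl u)) + ∑ u : G2.V, g (Sum.inr u) :=
  Fintype.sum_sum_type g

theorem card_disjUnion {p : ℕ} (G1 G2 : LGraph p) :
    Fintype.card (G1.disjUnion G2).V = Fintype.card G1.V + Fintype.card G2.V :=
  Fintype.card_sum

/-- **Core counting lemma.** If two connected graphs carry colorings with
uniquely-colored roots whose depth-`K` unfolding colors agree, then every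
color class (at any depth) has the same size in both graphs. -/
theorem step1 {p : ℕ} {α : Type} (G1 G2 : LGraph p) (f1 : G1.V → α) (f2 : G2.V → α)
    (h1 : G1.Connected) (h2 : G2.Connected) (v1 : G1.V) (v2 : G2.V)
    (hu1 : ∀ u, f1 u = f1 v1 → u = v1) (hu2 : ∀ u, f2 u = f2 v2 → u = v2)
    (K : ℕ) (hK : Fintype.card G1.V + Fintype.card G2.V ≤ K)
    (heq : mcol G1 f1 K v1 = mcol G2 f2 K v2) (m : ℕ) :
    Finset.univ.val.map (mcol G1 f1 m) = Finset.univ.val.map (mcol G2 f2 m) := by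
  have hneU : Nonempty (G1.disjUnion G2).V := ⟨Sum.inl v1⟩
  have hNK : Fintype.card (G1.disjUnion G2).V ≤ K := by
    rw [card_disjUnion]; exact hK
  -- abbreviations (as plain definitions, kept unfolded in statements)
  -- roots agree at every level
  have hroot : ∀ j, mcol (G1.disjUnion G2) (Sum.elim f1 f2) j (Sum.inl v1)
      = mcol (G1.disjUnion G2) (Sum.elim f1 f2) j (Sum.inr v2) := by
    have hscv : mcol (G1.disjUnion G2) (Sum.elim f1 f2) (Fintype.card (G1.disjUnion G2).V) (Sum.inl v1)
        = mcol (G1.disjUnion G2) (Sum.elim f1 f2) (Fintype.card (G1.disjUnion G2).V) (Sum.inr v2) := by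
      rw [mcol_disjUnion_inl, mcol_disjUnion_inr]
      exact mcol_mono hNK heq
    exact fun j => stable_all (G1.disjUnion G2) (Sum.elim f1 f2) hneU _ _ hscv j
  have hv12 : f1 v1 = f2 v2 := by
    have h0 := hroot 0
    rw [mcol_disjUnion_inl, mcol_disjUnion_inr] at h0
    exact h0
  set N := Fintype.card (G1.disjUnion G2).V with hNdef
  -- class functions
  have hA : ∀ (x y : (G1.disjUnion G2).V),
      mcol (G1.disjUnion G2) (Sum.elim f1 f2) N x = mcol (G1.disjUnion G2) (Sum.elim f1 f2) N y →
      ∀ k, aF (G1.disjUnion G2) (Sum.elim f1 f2) N k x = aF (G1.disjUnion G2) (Sum.elim f1 f2) N k y :=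
    fun x y hxy k => aF_stable (G1.disjUnion G2) (Sum.elim f1 f2) N k x y
      (stable_all (G1.disjUnion G2) (Sum.elim f1 f2) hneU x y hxy (N+k))
  -- the root class has exactly one member on each side
  have hclassv : ∀ z : (G1.disjUnion G2).V,
      mcol (G1.disjUnion G2) (Sum.elim f1 f2) N z
        = mcol (G1.disjUnion G2) (Sum.elim f1 f2) N (Sum.inl v1) →
      z = Sum.inl v1 ∨ z = Sum.inr v2 := by
    intro z hz
    have h0 : Sum.elim f1 f2 z = f1 v1 := by
      have := mcol_mono (Nat.zero_le N) hz
      have h0' : mcol (G1.disjUnion G2) (Sum.elim f1 f2) 0 (Sum.inl v1) = f1 v1 := rfl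
      rw [h0'] at this
      exact this
    cases z with
    | inl u => exact Or.inl (congrArg Sum.inl (hu1 u h0))
    | inr u => exact Or.inr (congrArg Sum.inr (hu2 u (h0.trans hv12)))
  -- walks from a left node into the root class are walks to `v1`
  have haL : ∀ (k : ℕ) (w : G1.V),
      aF (G1.disjUnion G2) (Sum.elim f1 f2) N k (Sum.inl w)
        (mcol (G1.disjUnion G2) (Sum.elim f1 f2) N (Sum.inl v1)) = wkc G1 k w v1 := by
    intro k w
    have hz0 : ∀ z ∈ Finset.univ.filter (fun z =>
        mcol (G1.disjUnion G2) (Sum.elim f1 f2) N z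
          = mcol (G1.disjUnion G2) (Sum.elim f1 f2) N (Sum.inl v1)),
        z ≠ Sum.inl v1 → wkc (G1.disjUnion G2) k (Sum.inl w) z = 0 := by
      intro z hz hzn
      rcases hclassv z (Finset.mem_filter.1 hz).2 with h | h
      · exact absurd h hzn
      · rw [h]; exact wkc_disjUnion_inl_inr G1 G2 k w v2
    have hmem : Sum.inl v1 ∈ Finset.univ.filter (fun z =>
        mcol (G1.disjUnion G2) (Sum.elim f1 f2) N z
          = mcol (G1.disjUnion G2) (Sum.elim f1 f2) N (Sum.inl v1)) :=
      Finset.mem_filter.2 ⟨Finset.mem_univ _, rfl⟩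
    erw [aF_walk]
    refine Eq.trans (Finset.sum_eq_single_of_mem (Sum.inl v1) hmem hz0) ?_
    exact wkc_disjUnion_inl_inl G1 G2 k w v1
  have haR : ∀ (k : ℕ) (w : G2.V),
      aF (G1.disjUnion G2) (Sum.elim f1 f2) N k (Sum.inr w)
        (mcol (G1.disjUnion G2) (Sum.elim f1 f2) N (Sum.inl v1)) = wkc G2 k w v2 := by
    intro k w
    have hz0 : ∀ z ∈ Finset.univ.filter (fun z =>
        mcol (G1.disjUnion G2) (Sum.elim f1 f2) N z
          = mcol (G1.disjUnion G2) (Sum.elim f1 f2) N (Sum.inl v1)),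
        z ≠ Sum.inr v2 → wkc (G1.disjUnion G2) k (Sum.inr w) z = 0 := by
      intro z hz hzn
      rcases hclassv z (Finset.mem_filter.1 hz).2 with h | h
      · rw [h]; exact wkc_disjUnion_inr_inl G1 G2 k w v1
      · exact absurd h hzn
    have hmem : Sum.inr v2 ∈ Finset.univ.filter (fun z =>
        mcol (G1.disjUnion G2) (Sum.elim f1 f2) N z
          = mcol (G1.disjUnion G2) (Sum.elim f1 f2) N (Sum.inl v1)) :=
      Finset.mem_filter.2 ⟨Finset.mem_univ _, (hroot N).symm⟩
    erw [aF_walk]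
    refine Eq.trans (Finset.sum_eq_single_of_mem (Sum.inr v2) hmem hz0) ?_
    exact wkc_disjUnion_inr_inr G1 G2 k w v2
  -- aF at a root, into an arbitrary class `t`, counts the class on its side
  have hsumL : ∀ (k : ℕ) (t : MTree α N),
      aF (G1.disjUnion G2) (Sum.elim f1 f2) N k (Sum.inl v1) t
        = ∑ u ∈ Finset.univ.filter (fun u : G1.V => mcol G1 f1 N u = t), wkc G1 k u v1 := by
    intro k t
    erw [aF_walk, Finset.sum_filter, sum_disjUnion_split]
    have hzero : (∑ u : G2.V, if mcol (G1.disjUnion G2) (Sum.elim f1 f2) N (Sum.inr u) = t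
        then wkc (G1.disjUnion G2) k (Sum.inl v1) (Sum.inr u) else 0) = 0 := by
      refine Finset.sum_eq_zero fun u _ => ?_
      rw [wkc_disjUnion_inl_inr]
      simp
    rw [hzero, add_zero, Finset.sum_filter]
    refine Finset.sum_congr rfl fun u _ => ?_
    rw [mcol_disjUnion_inl, wkc_disjUnion_inl_inl, wkc_symm]
  have hsumR : ∀ (k : ℕ) (t : MTree α N),
      aF (G1.disjUnion G2) (Sum.elim f1 f2) N k (Sum.inr v2) t
        = ∑ u ∈ Finset.univ.filter (fun u : G2.V => mcol G2 f2 N u = t), wkc G2 k u v2 := by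
    intro k t
    erw [aF_walk, Finset.sum_filter, sum_disjUnion_split]
    have hzero : (∑ u : G1.V, if mcol (G1.disjUnion G2) (Sum.elim f1 f2) N (Sum.inl u) = t
        then wkc (G1.disjUnion G2) k (Sum.inr v2) (Sum.inl u) else 0) = 0 := by
      refine Finset.sum_eq_zero fun u _ => ?_
      rw [wkc_disjUnion_inr_inl]
      simp
    rw [hzero, zero_add, Finset.sum_filter]
    refine Finset.sum_congr rfl fun u _ => ?_
    rw [mcol_disjUnion_inr, wkc_disjUnion_inr_inr, wkc_symm]
  -- key class-size equality at level N
  have key : ∀ t : MTree α N,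
      (Finset.univ.filter (fun u : G1.V => mcol G1 f1 N u = t)).card
        = (Finset.univ.filter (fun u : G2.V => mcol G2 f2 N u = t)).card := by
    intro t
    by_cases hc1 : ∃ u0 : G1.V, mcol G1 f1 N u0 = t
    · obtain ⟨u0, hu0⟩ := hc1
      obtain ⟨r, hr⟩ := h1 v1 u0
      obtain ⟨k, hk⟩ := wkc_pos_of_within G1 r v1 u0 hr
      -- all class members on both sides have the same `aF k · (class of v1)` value
      have hconst : ∀ (x : (G1.disjUnion G2).V),
          mcol (G1.disjUnion G2) (Sum.elim f1 f2) N x = t →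
          aF (G1.disjUnion G2) (Sum.elim f1 f2) N k x
            (mcol (G1.disjUnion G2) (Sum.elim f1 f2) N (Sum.inl v1))
            = wkc G1 k u0 v1 := by
        intro x hx
        have hx0 : mcol (G1.disjUnion G2) (Sum.elim f1 f2) N x
            = mcol (G1.disjUnion G2) (Sum.elim f1 f2) N (Sum.inl u0) := by
          rw [hx, mcol_disjUnion_inl, hu0]
        rw [hA x (Sum.inl u0) hx0 k, haL]
      have hL : aF (G1.disjUnion G2) (Sum.elim f1 f2) N k (Sum.inl v1) t
          = (Finset.univ.filter (fun u : G1.V => mcol G1 f1 N u = t)).card * wkc G1 k u0 v1 := by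
        rw [hsumL]
        rw [Finset.sum_congr rfl (fun u hu => ?_), Finset.sum_const, smul_eq_mul]
        have hcu : mcol (G1.disjUnion G2) (Sum.elim f1 f2) N (Sum.inl u) = t := by
          rw [mcol_disjUnion_inl]; exact (Finset.mem_filter.1 hu).2
        rw [← hconst (Sum.inl u) hcu, haL]
      have hR : aF (G1.disjUnion G2) (Sum.elim f1 f2) N k (Sum.inr v2) t
          = (Finset.univ.filter (fun u : G2.V => mcol G2 f2 N u = t)).card * wkc G1 k u0 v1 := by
        rw [hsumR]
        rw [Finset.sum_congr rfl (fun u hu => ?_), Finset.sum_const, smul_eq_mul]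
        have hcu : mcol (G1.disjUnion G2) (Sum.elim f1 f2) N (Sum.inr u) = t := by
          rw [mcol_disjUnion_inr]; exact (Finset.mem_filter.1 hu).2
        rw [← hconst (Sum.inr u) hcu, haR]
      have hEqa : aF (G1.disjUnion G2) (Sum.elim f1 f2) N k (Sum.inl v1) t
          = aF (G1.disjUnion G2) (Sum.elim f1 f2) N k (Sum.inr v2) t := by
        rw [hA _ _ (hroot N) k]
      rw [hL, hR] at hEqa
      exact Nat.eq_of_mul_eq_mul_right hk hEqa
    · by_cases hc2 : ∃ u0 : G2.V, mcol G2 f2 N u0 = t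
      · obtain ⟨u0, hu0⟩ := hc2
        obtain ⟨r, hr⟩ := h2 v2 u0
        obtain ⟨k, hk⟩ := wkc_pos_of_within G2 r v2 u0 hr
        have hconst : ∀ (x : (G1.disjUnion G2).V),
            mcol (G1.disjUnion G2) (Sum.elim f1 f2) N x = t →
            aF (G1.disjUnion G2) (Sum.elim f1 f2) N k x
              (mcol (G1.disjUnion G2) (Sum.elim f1 f2) N (Sum.inl v1))
              = wkc G2 k u0 v2 := by
          intro x hx
          have hx0 : mcol (G1.disjUnion G2) (Sum.elim f1 f2) N x
              = mcol (G1.disjUnion G2) (Sum.elim f1 f2) N (Sum.inr u0) := by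
            rw [hx, mcol_disjUnion_inr, hu0]
          rw [hA x (Sum.inr u0) hx0 k, haR]
        have hL : aF (G1.disjUnion G2) (Sum.elim f1 f2) N k (Sum.inl v1) t = 0 := by
          rw [hsumL]
          have : Finset.univ.filter (fun u : G1.V => mcol G1 f1 N u = t) = ∅ := by
            refine Finset.filter_eq_empty_iff.2 fun u _ => fun hcon => hc1 ⟨u, hcon⟩
          rw [this, Finset.sum_empty]
        have hR : aF (G1.disjUnion G2) (Sum.elim f1 f2) N k (Sum.inr v2) t
            = (Finset.univ.filter (fun u : G2.V => mcol G2 f2 N u = t)).card * wkc G2 k u0 v2 := by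
          rw [hsumR]
          rw [Finset.sum_congr rfl (fun u hu => ?_), Finset.sum_const, smul_eq_mul]
          have hcu : mcol (G1.disjUnion G2) (Sum.elim f1 f2) N (Sum.inr u) = t := by
            rw [mcol_disjUnion_inr]; exact (Finset.mem_filter.1 hu).2
          rw [← hconst (Sum.inr u) hcu, haR]
        have hEqa : aF (G1.disjUnion G2) (Sum.elim f1 f2) N k (Sum.inl v1) t
            = aF (G1.disjUnion G2) (Sum.elim f1 f2) N k (Sum.inr v2) t := by
          rw [hA _ _ (hroot N) k]
        rw [hL, hR] at hEqa
        have hcard1 : (Finset.univ.filter (fun u : G1.V => mcol G1 f1 N u = t)).card = 0 := by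
          rw [Finset.card_eq_zero]
          refine Finset.filter_eq_empty_iff.2 fun u _ => fun hcon => hc1 ⟨u, hcon⟩
        have hcard2 : (Finset.univ.filter (fun u : G2.V => mcol G2 f2 N u = t)).card = 0 := by
          rcases Nat.mul_eq_zero.mp hEqa.symm with h | h
          · exact h
          · omega
        rw [hcard1, hcard2]
      · have e1 : Finset.univ.filter (fun u : G1.V => mcol G1 f1 N u = t) = ∅ :=
          Finset.filter_eq_empty_iff.2 fun u _ hcon => hc1 ⟨u, hcon⟩
        have e2 : Finset.univ.filter (fun u : G2.V => mcol G2 f2 N u = t) = ∅ :=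
          Finset.filter_eq_empty_iff.2 fun u _ hcon => hc2 ⟨u, hcon⟩
        rw [e1, e2]
        rfl
  -- multiset equality at level N
  have keyM : Finset.univ.val.map (mcol G1 f1 N) = Finset.univ.val.map (mcol G2 f2 N) := by
    refine Multiset.ext.2 fun t => ?_
    rw [Multiset.count_map, Multiset.count_map]
    have hc1 : (Finset.univ.val.filter (fun a => t = mcol G1 f1 N a)).card
        = (Finset.univ.filter (fun u : G1.V => mcol G1 f1 N u = t)).card := by
      refine congrArg Multiset.card (Multiset.filter_congr fun a _ => ?_)
      exact ⟨fun h => h.symm, fun h => h.symm⟩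
    have hc2 : (Finset.univ.val.filter (fun a => t = mcol G2 f2 N a)).card
        = (Finset.univ.filter (fun u : G2.V => mcol G2 f2 N u = t)).card := by
      refine congrArg Multiset.card (Multiset.filter_congr fun a _ => ?_)
      exact ⟨fun h => h.symm, fun h => h.symm⟩
    rw [hc1, hc2]  -- Multiset.card (filter) vs Finset.card (filter): defeq
    exact key t
  -- transfer to an arbitrary level m
  haveI hneT : Nonempty (MTree α m) :=
    ⟨mcol (G1.disjUnion G2) (Sum.elim f1 f2) m (Sum.inl v1)⟩
  obtain ⟨ψ, hψ⟩ := exists_factor (mcol (G1.disjUnion G2) (Sum.elim f1 f2) N)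
    (mcol (G1.disjUnion G2) (Sum.elim f1 f2) m)
    (fun x y hxy => stable_all (G1.disjUnion G2) (Sum.elim f1 f2) hneU x y hxy m)
  calc Finset.univ.val.map (mcol G1 f1 m)
      = (Finset.univ.val.map (mcol G1 f1 N)).map ψ := by
        rw [Multiset.map_map]
        refine Multiset.map_congr rfl fun u _ => ?_
        have := hψ (Sum.inl u)
        rw [mcol_disjUnion_inl, mcol_disjUnion_inl] at this
        exact this
    _ = (Finset.univ.val.map (mcol G2 f2 N)).map ψ := by rw [keyM]
    _ = Finset.univ.val.map (mcol G2 f2 m) := by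
        rw [Multiset.map_map]
        refine Multiset.map_congr rfl fun u _ => ?_
        have := hψ (Sum.inr u)
        rw [mcol_disjUnion_inr, mcol_disjUnion_inr] at this
        exact this.symm

/-! #### Marked embeddings -/

/-- Append an individualization mark for `v` to an embedding. -/
def markEmb {p D : ℕ} (G : LGraph p) (g : G.V → Fin D → ℝ) (v : G.V) :
    G.V → Fin (D+1) → ℝ :=
  fun w => Fin.append (g w) (fun _ => if w = v then (1:ℝ) else 0)

/-- Dropping the last coordinate. -/
def projD {D : ℕ} (x : Fin (D+1) → ℝ) : Fin D → ℝ := fun i => x (Fin.castAdd 1 i)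

theorem projD_markEmb {p D : ℕ} (G : LGraph p) (g : G.V → Fin D → ℝ) (v w : G.V) :
    projD (markEmb G g v w) = g w := by
  funext i
  show markEmb G g v w (Fin.castAdd 1 i) = g w i
  show Fin.append (g w) (fun _ => if w = v then (1:ℝ) else 0) (Fin.castAdd 1 i) = g w i
  exact Fin.append_left _ _ i

theorem markEmb_mark {p D : ℕ} (G : LGraph p) (g : G.V → Fin D → ℝ) (v w : G.V) :
    markEmb G g v w (Fin.natAdd D 0) = if w = v then 1 else 0 :=
  Fin.append_right _ _ 0

theorem markEmb_unique {p D : ℕ} (G : LGraph p) (g : G.V → Fin D → ℝ) (v u : G.V)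
    (h : markEmb G g v u = markEmb G g v v) : u = v := by
  have h2 := congrFun h (Fin.natAdd D 0)
  rw [markEmb_mark, markEmb_mark, if_pos rfl] at h2
  by_contra hc
  rw [if_neg hc] at h2
  exact zero_ne_one h2

theorem mcol_proj_mark {p D : ℕ} (G : LGraph p) (g : G.V → Fin D → ℝ) (v : G.V)
    (j : ℕ) (u : G.V) :
    MTree.map projD (mcol G (markEmb G g v) j u) = mcol G g j u := by
  have he : (fun x => projD (markEmb G g v x)) = g := funext (projD_markEmb G g v)
  rw [← mcol_map, he]

/-! #### Joint factoring of WL colorings through unfolding colors -/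

/-- The colorings `col1`, `col2` jointly factor (round by round) through the
unfolding colors of the embeddings `g1`, `g2`. -/
def Factors {p : ℕ} (H : HashSetup p) (G1 G2 : LGraph p) {D : ℕ}
    (g1 : G1.V → Fin D → ℝ) (g2 : G2.V → Fin D → ℝ)
    (col1 : G1.V → H.C) (col2 : G2.V → H.C) : Prop :=
  ∀ m, ∃ (j : ℕ) (Φ : MTree (Fin D → ℝ) j → H.C),
    (∀ u, wlIter H G1 m col1 u = Φ (mcol G1 g1 j u)) ∧
    (∀ u, wlIter H G2 m col2 u = Φ (mcol G2 g2 j u))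

/-- Translation of hash colors from unfolding colors (for the initial coloring). -/
noncomputable def WtoH {p : ℕ} (H : HashSetup p) : ∀ (k : ℕ), MTree (Fin p → ℝ) k → H.C
  | 0, t => H.hInit (fun i => t i = 1)
  | k+1, t => H.hRefine (WtoH H k t.1) (t.2.map (WtoH H k))

theorem WtoH_spec {p : ℕ} (H : HashSetup p) (G : LGraph p) :
    ∀ (k : ℕ) (u : G.V), wlIter H G k (initCol H G) u = WtoH H k (mcol G G.embG k u)
  | 0, u => by
    show H.hInit (G.lab u) = H.hInit (fun i => G.embG u i = 1)
    congr 1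
    funext i
    refine propext ?_
    constructor
    · intro h; simp [LGraph.embG, h]
    · intro h
      by_contra hc
      simp only [LGraph.embG, if_neg hc] at h
      exact zero_ne_one h
  | k+1, u => by
    show H.hRefine (wlIter H G k (initCol H G) u)
        ((G.nbrFinset u).val.map (wlIter H G k (initCol H G)))
      = H.hRefine (WtoH H k (mcol G G.embG k u))
        (((G.nbrFinset u).val.map (mcol G G.embG k)).map (WtoH H k))
    rw [Multiset.map_map, WtoH_spec H G k u]
    congr 1
    exact Multiset.map_congr rfl fun z _ => WtoH_spec H G k z

theorem factors_init {p : ℕ} (H : HashSetup p) (G1 G2 : LGraph p) (v1 : G1.V) (v2 : G2.V) :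
    Factors H G1 G2 (markEmb G1 G1.embG v1) (markEmb G2 G2.embG v2)
      (initCol H G1) (initCol H G2) := by
  intro m
  refine ⟨m, fun t => WtoH H m (MTree.map projD t), ?_, ?_⟩
  · intro u
    rw [WtoH_spec H G1 m u]
    show _ = WtoH H m (MTree.map projD (mcol G1 (markEmb G1 G1.embG v1) m u))
    rw [mcol_proj_mark]
  · intro u
    rw [WtoH_spec H G2 m u]
    show _ = WtoH H m (MTree.map projD (mcol G2 (markEmb G2 G2.embG v2) m u))
    rw [mcol_proj_mark]

theorem factors_child {p : ℕ} (H : HashSetup p) (G1 G2 : LGraph p) {D : ℕ}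
    (g1 : G1.V → Fin D → ℝ) (g2 : G2.V → Fin D → ℝ)
    (col1 : G1.V → H.C) (col2 : G2.V → H.C)
    (hF : Factors H G1 G2 g1 g2 col1 col2) (n : ℕ) (v1 : G1.V) (v2 : G2.V) :
    Factors H G1 G2 (markEmb G1 g1 v1) (markEmb G2 g2 v2)
      (fun u => H.hIndiv (wlIter H G1 n col1 u) (u = v1))
      (fun u => H.hIndiv (wlIter H G2 n col2 u) (u = v2)) := by
  intro m
  induction m with
  | zero =>
    obtain ⟨j, Φ, h1, h2⟩ := hF n
    refine ⟨j, fun t => H.hIndiv (Φ (MTree.map projD t))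
      (MTree.root t (Fin.natAdd D 0) = 1), ?_, ?_⟩
    · intro u
      show H.hIndiv (wlIter H G1 n col1 u) (u = v1) = _
      have hmark : ((mcol G1 (markEmb G1 g1 v1) j u).root (Fin.natAdd D 0) = 1)
          = (u = v1) := by
        rw [mcol_root]
        show ((markEmb G1 g1 v1 u) (Fin.natAdd D 0) = 1) = (u = v1)
        rw [markEmb_mark]
        refine propext ?_
        by_cases h : u = v1
        · simp [h]
        · simp [h]
      show H.hIndiv (wlIter H G1 n col1 u) (u = v1)
        = H.hIndiv (Φ (MTree.map projD (mcol G1 (markEmb G1 g1 v1) j u)))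
            ((mcol G1 (markEmb G1 g1 v1) j u).root (Fin.natAdd D 0) = 1)
      rw [mcol_proj_mark, ← h1 u, hmark]
    · intro u
      show H.hIndiv (wlIter H G2 n col2 u) (u = v2) = _
      have hmark : ((mcol G2 (markEmb G2 g2 v2) j u).root (Fin.natAdd D 0) = 1)
          = (u = v2) := by
        rw [mcol_root]
        show ((markEmb G2 g2 v2 u) (Fin.natAdd D 0) = 1) = (u = v2)
        rw [markEmb_mark]
        refine propext ?_
        by_cases h : u = v2
        · simp [h]
        · simp [h]
      show H.hIndiv (wlIter H G2 n col2 u) (u = v2)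
        = H.hIndiv (Φ (MTree.map projD (mcol G2 (markEmb G2 g2 v2) j u)))
            ((mcol G2 (markEmb G2 g2 v2) j u).root (Fin.natAdd D 0) = 1)
      rw [mcol_proj_mark, ← h2 u, hmark]
  | succ m ih =>
    obtain ⟨j, Φ, h1, h2⟩ := ih
    refine ⟨j+1, fun t => H.hRefine (Φ t.1) (t.2.map Φ), ?_, ?_⟩
    · intro u
      show H.hRefine (wlIter H G1 m (fun u => H.hIndiv (wlIter H G1 n col1 u) (u = v1)) u)
          ((G1.nbrFinset u).val.map (wlIter H G1 m (fun u => H.hIndiv (wlIter H G1 n col1 u) (u = v1))))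
        = H.hRefine (Φ (mcol G1 (markEmb G1 g1 v1) j u))
          (((G1.nbrFinset u).val.map (mcol G1 (markEmb G1 g1 v1) j)).map Φ)
      rw [Multiset.map_map, h1 u]
      congr 1
      exact Multiset.map_congr rfl fun z _ => h1 z
    · intro u
      show H.hRefine (wlIter H G2 m (fun u => H.hIndiv (wlIter H G2 n col2 u) (u = v2)) u)
          ((G2.nbrFinset u).val.map (wlIter H G2 m (fun u => H.hIndiv (wlIter H G2 n col2 u) (u = v2))))
        = H.hRefine (Φ (mcol G2 (markEmb G2 g2 v2) j u))
          (((G2.nbrFinset u).val.map (mcol G2 (markEmb G2 g2 v2) j)).map Φ)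
      rw [Multiset.map_map, h2 u]
      congr 1
      exact Multiset.map_congr rfl fun z _ => h2 z

/-! #### Fiberwise bijections from fiberwise counts -/

theorem equivOfFiberCards {α β γ : Type} [DecidableEq α] [DecidableEq β] :
    ∀ (n : ℕ) (S1 : Finset α) (S2 : Finset β) (q1 : α → γ) (q2 : β → γ),
    S1.card = n →
    (∀ t, (S1.filter (fun a => q1 a = t)).card = (S2.filter (fun b => q2 b = t)).card) →
    ∃ e : {x // x ∈ S1} ≃ {y // y ∈ S2}, ∀ a, q2 (e a).1 = q1 a.1 := by
  intro n
  induction n with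
  | zero =>
    intro S1 S2 q1 q2 hcard h
    have hS1 : S1 = ∅ := Finset.card_eq_zero.1 hcard
    have hS2 : S2 = ∅ := by
      by_contra hne
      obtain ⟨b, hb⟩ := Finset.nonempty_iff_ne_empty.2 hne
      have := h (q2 b)
      rw [hS1] at this
      simp only [Finset.filter_empty, Finset.card_empty] at this
      have hbmem : b ∈ S2.filter (fun b' => q2 b' = q2 b) :=
        Finset.mem_filter.2 ⟨hb, rfl⟩
      have := Finset.card_pos.2 ⟨b, hbmem⟩
      omega
    subst hS1; subst hS2
    refine ⟨⟨fun x => absurd x.2 (Finset.notMem_empty _),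
      fun y => absurd y.2 (Finset.notMem_empty _),
      fun x => absurd x.2 (Finset.notMem_empty _),
      fun y => absurd y.2 (Finset.notMem_empty _)⟩,
      fun a => absurd a.2 (Finset.notMem_empty _)⟩
  | succ n ih =>
    intro S1 S2 q1 q2 hcard h
    have hne1 : S1.Nonempty := Finset.card_pos.1 (by omega)
    obtain ⟨a, ha⟩ := hne1
    have hfib : 0 < (S2.filter (fun b => q2 b = q1 a)).card := by
      rw [← h (q1 a)]
      exact Finset.card_pos.2 ⟨a, Finset.mem_filter.2 ⟨ha, rfl⟩⟩
    obtain ⟨b, hb⟩ := Finset.card_pos.1 hfib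
    have hbS2 : b ∈ S2 := (Finset.mem_filter.1 hb).1
    have hbq : q2 b = q1 a := (Finset.mem_filter.1 hb).2
    have hcard' : (S1.erase a).card = n := by
      rw [Finset.card_erase_of_mem ha, hcard]
      omega
    have h' : ∀ t, ((S1.erase a).filter (fun x => q1 x = t)).card
        = ((S2.erase b).filter (fun y => q2 y = t)).card := by
      intro t
      rw [Finset.filter_erase, Finset.filter_erase]
      by_cases ht : q1 a = t
      · have haf : a ∈ S1.filter (fun x => q1 x = t) := Finset.mem_filter.2 ⟨ha, ht⟩
        have hbf : b ∈ S2.filter (fun y => q2 y = t) :=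
          Finset.mem_filter.2 ⟨hbS2, hbq.trans ht⟩
        rw [Finset.card_erase_of_mem haf, Finset.card_erase_of_mem hbf, h t]
      · have haf : a ∉ S1.filter (fun x => q1 x = t) := by
          intro hc
          exact ht (Finset.mem_filter.1 hc).2
        have hbf : b ∉ S2.filter (fun y => q2 y = t) := by
          intro hc
          exact ht (hbq ▸ (Finset.mem_filter.1 hc).2)
        rw [Finset.erase_eq_of_notMem haf, Finset.erase_eq_of_notMem hbf, h t]
    obtain ⟨e', he'⟩ := ih (S1.erase a) (S2.erase b) q1 q2 hcard' h'
    -- assemble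
    have hins1 : ∀ x, x ∈ S1 ↔ x ∈ insert a (S1.erase a) := by
      intro x; rw [Finset.insert_erase ha]
    have hins2 : ∀ y, y ∈ S2 ↔ y ∈ insert b (S2.erase b) := by
      intro y; rw [Finset.insert_erase hbS2]
    have hnia : a ∉ S1.erase a := Finset.notMem_erase a S1
    have hnib : b ∉ S2.erase b := Finset.notMem_erase b S2
    set E : {x // x ∈ S1} ≃ {y // y ∈ S2} :=
      ((Equiv.subtypeEquivRight hins1).trans
        (((S1.erase a).subtypeInsertEquivOption hnia).trans
          ((Equiv.optionCongr e').trans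
            (((S2.erase b).subtypeInsertEquivOption hnib).symm.trans
              (Equiv.subtypeEquivRight hins2).symm)))) with hE
    refine ⟨E, ?_⟩
    rintro ⟨x, hx⟩
    by_cases hxa : x = a
    · subst hxa
      have hEx : (E ⟨x, hx⟩).1 = b := by
        rw [hE]
        simp [Finset.subtypeInsertEquivOption, Equiv.optionCongr]
      rw [hEx, hbq]
    · have hxmem : x ∈ S1.erase a := Finset.mem_erase.2 ⟨hxa, hx⟩
      have hEx : (E ⟨x, hx⟩).1 = (e' ⟨x, hxmem⟩).1 := by
        rw [hE]
        simp [Finset.subtypeInsertEquivOption, Equiv.optionCongr, hxa]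
      rw [hEx]
      exact he' ⟨x, hxmem⟩

/-! #### Small helpers for the main induction -/

theorem filter_card_inst {α : Type} (p : α → Prop) (d1 d2 : DecidablePred p) (s : Finset α) :
    (@Finset.filter α p d1 s).card = (@Finset.filter α p d2 s).card := by
  have h : d1 = d2 := Subsingleton.elim d1 d2
  rw [h]

theorem count_filter_eq {α γ : Type} [Fintype α] (f : α → γ) (t : γ) :
    Multiset.count t (Finset.univ.val.map f)
      = (Finset.univ.filter (fun a => f a = t)).card := by
  rw [Multiset.count_map]
  refine congrArg Multiset.card (Multiset.filter_congr fun a _ => ?_)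
  exact ⟨fun h => h.symm, fun h => h.symm⟩

theorem count_of_map_eq {α β γ : Type} [Fintype α] [Fintype β] {f1 : α → γ} {f2 : β → γ}
    (h : Finset.univ.val.map f1 = Finset.univ.val.map f2) (t : γ) :
    (Finset.univ.filter (fun a => f1 a = t)).card
      = (Finset.univ.filter (fun b => f2 b = t)).card := by
  rw [← count_filter_eq, ← count_filter_eq, h]

theorem discrete_iff_counts {α γ : Type} [Fintype α] (f : α → γ) :
    Discrete f ↔ ∀ t, (Finset.univ.filter (fun a => f a = t)).card ≤ 1 := by
  constructor
  · intro hd t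
    refine Finset.card_le_one.2 fun x hx y hy => ?_
    exact hd x y ((Finset.mem_filter.1 hx).2.trans ((Finset.mem_filter.1 hy).2).symm)
  · intro hc x y hxy
    have hx : x ∈ Finset.univ.filter (fun a => f a = f y) :=
      Finset.mem_filter.2 ⟨Finset.mem_univ _, hxy⟩
    have hy : y ∈ Finset.univ.filter (fun a => f a = f y) :=
      Finset.mem_filter.2 ⟨Finset.mem_univ _, rfl⟩
    exact Finset.card_le_one.1 (hc (f y)) x hx y hy

theorem ctree_iso_node' {C : Type} {l1 l2 : Multiset C} {cs1 cs2 : List (CTree C)}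
    (hl : l1 = l2) (e : Fin cs1.length ≃ Fin cs2.length)
    (h : ∀ i, CTree.Iso (cs1.get i) (cs2.get (e i))) :
    CTree.Iso (.node l1 cs1) (.node l2 cs2) := by
  subst hl
  exact CTree.Iso.node e h

theorem min'_congr {α : Type} [LinearOrder α] {s t : Finset α} (hst : s = t)
    (hs : s.Nonempty) (ht : t.Nonempty) : s.min' hs = t.min' ht := by
  subst hst
  rfl

noncomputable def toListEquiv {α : Type} (s : Finset α) :
    Fin s.toList.length ≃ {x // x ∈ s} := by
  refine Equiv.ofBijective
    (fun i => ⟨s.toList.get i, Finset.mem_toList.1 (s.toList.get_mem _)⟩) ⟨?_, ?_⟩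
  · intro i j hij
    have h := congrArg Subtype.val hij
    exact (List.Nodup.get_inj_iff (Finset.nodup_toList s)).1 h
  · rintro ⟨x, hx⟩
    obtain ⟨i, hi⟩ := List.mem_iff_get.1 (Finset.mem_toList.2 hx)
    exact ⟨i, Subtype.ext hi⟩

theorem toListEquiv_val {α : Type} (s : Finset α) (i : Fin s.toList.length) :
    (toListEquiv s i).1 = s.toList.get i := rfl

theorem get_map_toListEquiv {α C : Type} (s : Finset α) (f : α → C)
    (hlen : (s.toList.map f).length = s.toList.length)
    (i : Fin (s.toList.map f).length) :
    (s.toList.map f).get i = f ((toListEquiv s (finCongr hlen i)).1) := by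
  rw [toListEquiv_val]
  simp [List.get_eq_getElem, List.getElem_map]

/-! #### The main induction -/

theorem mainS {p : ℕ} (H : HashSetup p) (G1 G2 : LGraph p)
    (h1 : G1.Connected) (h2 : G2.Connected) (K : ℕ)
    (hK : Fintype.card G1.V + Fintype.card G2.V ≤ K) :
    ∀ (d : ℕ) (D : ℕ) (g1 : G1.V → Fin D → ℝ) (g2 : G2.V → Fin D → ℝ)
      (col1 : G1.V → H.C) (col2 : G2.V → H.C),
      Factors H G1 G2 g1 g2 col1 col2 →
      ∀ (v1 : G1.V) (v2 : G2.V),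
        (∀ u, g1 u = g1 v1 → u = v1) → (∀ u, g2 u = g2 v2 → u = v2) →
        nval K d D G1 g1 v1 = nval K d D G2 g2 v2 →
        CTree.Iso (WLIR H G1 d col1) (WLIR H G2 d col2) := by
  intro d
  induction d with
  | zero =>
    intro D g1 g2 col1 col2 hF v1 v2 hu1 hu2 hnv
    have hmc : mcol G1 g1 K v1 = mcol G2 g2 K v2 := hnv
    have hms : ∀ m, Finset.univ.val.map (mcol G1 g1 m)
        = Finset.univ.val.map (mcol G2 g2 m) :=
      step1 G1 G2 g1 g2 h1 h2 v1 v2 hu1 hu2 K hK hmc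
    have hcards : Fintype.card G2.V = Fintype.card G1.V := by
      have := congrArg Multiset.card (hms 0)
      simpa using this.symm
    obtain ⟨j, Φ, hΦ1, hΦ2⟩ := hF (Fintype.card G1.V)
    have hlab : Finset.univ.val.map (wlIter H G1 (Fintype.card G1.V) col1)
        = Finset.univ.val.map (wlIter H G2 (Fintype.card G2.V) col2) := by
      calc Finset.univ.val.map (wlIter H G1 (Fintype.card G1.V) col1)
          = (Finset.univ.val.map (mcol G1 g1 j)).map Φ := by
            rw [Multiset.map_map]; exact Multiset.map_congr rfl fun u _ => hΦ1 u
        _ = (Finset.univ.val.map (mcol G2 g2 j)).map Φ := by rw [hms j]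
        _ = Finset.univ.val.map (wlIter H G2 (Fintype.card G2.V) col2) := by
            rw [Multiset.map_map, hcards]
            exact Multiset.map_congr rfl fun u _ => (hΦ2 u).symm
    show CTree.Iso
      (CTree.node (colMultiset H G1 (wlIter H G1 (Fintype.card G1.V) col1)) [])
      (CTree.node (colMultiset H G2 (wlIter H G2 (Fintype.card G2.V) col2)) [])
    exact ctree_iso_node' hlab (Equiv.refl _) (fun i => i.elim0)
  | succ d ih =>
    intro D g1 g2 col1 col2 hF v1 v2 hu1 hu2 hnv
    letI := H.linC
    have hmc : mcol G1 (fun u => (g1 u, nval K d (D+1) G1 (markEmb G1 g1 u) u)) K v1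
        = mcol G2 (fun u => (g2 u, nval K d (D+1) G2 (markEmb G2 g2 u) u)) K v2 := hnv
    have huF1 : ∀ u, (fun u => (g1 u, nval K d (D+1) G1 (markEmb G1 g1 u) u)) u
        = (fun u => (g1 u, nval K d (D+1) G1 (markEmb G1 g1 u) u)) v1 → u = v1 :=
      fun u h => hu1 u (congrArg Prod.fst h)
    have huF2 : ∀ u, (fun u => (g2 u, nval K d (D+1) G2 (markEmb G2 g2 u) u)) u
        = (fun u => (g2 u, nval K d (D+1) G2 (markEmb G2 g2 u) u)) v2 → u = v2 :=
      fun u h => hu2 u (congrArg Prod.fst h)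
    have hms : ∀ m, Finset.univ.val.map
          (mcol G1 (fun u => (g1 u, nval K d (D+1) G1 (markEmb G1 g1 u) u)) m)
        = Finset.univ.val.map
          (mcol G2 (fun u => (g2 u, nval K d (D+1) G2 (markEmb G2 g2 u) u)) m) :=
      step1 G1 G2 _ _ h1 h2 v1 v2 huF1 huF2 K hK hmc
    have hcards : Fintype.card G2.V = Fintype.card G1.V := by
      have := congrArg Multiset.card (hms 0)
      simpa using this.symm
    simp only [WLIR, hcards]
    -- multiset equality for the `g`-level unfolding colors
    obtain ⟨j, Φ, hΦ1, hΦ2⟩ := hF (Fintype.card G1.V)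
    have hfst1 : ∀ u : G1.V, MTree.map Prod.fst
        (mcol G1 (fun u => (g1 u, nval K d (D+1) G1 (markEmb G1 g1 u) u)) j u)
          = mcol G1 g1 j u :=
      fun u => (mcol_map G1 (fun u => (g1 u, nval K d (D+1) G1 (markEmb G1 g1 u) u))
        Prod.fst j u).symm
    have hfst2 : ∀ u : G2.V, MTree.map Prod.fst
        (mcol G2 (fun u => (g2 u, nval K d (D+1) G2 (markEmb G2 g2 u) u)) j u)
          = mcol G2 g2 j u :=
      fun u => (mcol_map G2 (fun u => (g2 u, nval K d (D+1) G2 (markEmb G2 g2 u) u))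
        Prod.fst j u).symm
    have hmsg : Finset.univ.val.map (mcol G1 g1 j) = Finset.univ.val.map (mcol G2 g2 j) := by
      calc Finset.univ.val.map (mcol G1 g1 j)
          = (Finset.univ.val.map
              (mcol G1 (fun u => (g1 u, nval K d (D+1) G1 (markEmb G1 g1 u) u)) j)).map
              (MTree.map Prod.fst) := by
            rw [Multiset.map_map]
            exact Multiset.map_congr rfl fun u _ => (hfst1 u).symm
        _ = (Finset.univ.val.map
              (mcol G2 (fun u => (g2 u, nval K d (D+1) G2 (markEmb G2 g2 u) u)) j)).map
              (MTree.map Prod.fst) := by rw [hms j]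
        _ = Finset.univ.val.map (mcol G2 g2 j) := by
            rw [Multiset.map_map]
            exact Multiset.map_congr rfl fun u _ => hfst2 u
    have hlab : Finset.univ.val.map (wlIter H G1 (Fintype.card G1.V) col1)
        = Finset.univ.val.map (wlIter H G2 (Fintype.card G1.V) col2) := by
      calc Finset.univ.val.map (wlIter H G1 (Fintype.card G1.V) col1)
          = (Finset.univ.val.map (mcol G1 g1 j)).map Φ := by
            rw [Multiset.map_map]; exact Multiset.map_congr rfl fun u _ => hΦ1 u
        _ = (Finset.univ.val.map (mcol G2 g2 j)).map Φ := by rw [hmsg]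
        _ = Finset.univ.val.map (wlIter H G2 (Fintype.card G1.V) col2) := by
            rw [Multiset.map_map]
            exact Multiset.map_congr rfl fun u _ => (hΦ2 u).symm
    have hcountP : ∀ c : H.C,
        (@Finset.filter G1.V (fun u => wlIter H G1 (Fintype.card G1.V) col1 u = c)
          (fun a => propDecidable _) Finset.univ).card
          = (@Finset.filter G2.V (fun u => wlIter H G2 (Fintype.card G1.V) col2 u = c)
            (fun a => propDecidable _) Finset.univ).card :=
      fun c => count_of_map_eq hlab c
    have hcount : ∀ c : H.C,
        (Finset.univ.filter (fun u : G1.V => wlIter H G1 (Fintype.card G1.V) col1 u = c)).card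
          = (Finset.univ.filter (fun u : G2.V => wlIter H G2 (Fintype.card G1.V) col2 u = c)).card :=
      fun c => Eq.trans (filter_card_inst _ _ _ _)
        (Eq.trans (hcountP c) (filter_card_inst _ _ _ _))
    have hdisc : Discrete (wlIter H G1 (Fintype.card G1.V) col1)
        ↔ Discrete (wlIter H G2 (Fintype.card G1.V) col2) := by
      rw [discrete_iff_counts, discrete_iff_counts]
      constructor
      · intro hd t; rw [← hcountP t]; exact hd t
      · intro hd t; rw [hcountP t]; exact hd t
    by_cases hd1 : Discrete (wlIter H G1 (Fintype.card G1.V) col1)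
    · rw [dif_pos hd1, dif_pos (hdisc.1 hd1)]
      exact ctree_iso_node' hlab (Equiv.refl _) (fun i => i.elim0)
    · have hd2 : ¬ Discrete (wlIter H G2 (Fintype.card G1.V) col2) := fun h => hd1 (hdisc.2 h)
      rw [dif_neg hd1, dif_neg hd2]
      generalize_proofs hne1 hne1' hne2' hne2
      have hbigs : (Finset.filter (fun c =>
            1 < (Finset.filter (fun v => wlIter H G1 (Fintype.card G1.V) col1 v = c) Finset.univ).card)
            (Finset.image (wlIter H G1 (Fintype.card G1.V) col1) Finset.univ))
          = (Finset.filter (fun c =>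
            1 < (Finset.filter (fun v => wlIter H G2 (Fintype.card G1.V) col2 v = c) Finset.univ).card)
            (Finset.image (wlIter H G2 (Fintype.card G1.V) col2) Finset.univ)) := by
        ext c
        simp only [Finset.mem_filter, Finset.mem_image]
        constructor
        · rintro ⟨⟨x, _, hx⟩, hcnt⟩
          have hpos : 0 < (Finset.univ.filter
              (fun v => wlIter H G2 (Fintype.card G1.V) col2 v = c)).card := by
            rw [← hcount c]; omega
          obtain ⟨y, hy⟩ := Finset.card_pos.1 hpos
          exact ⟨⟨y, Finset.mem_univ y, (Finset.mem_filter.1 hy).2⟩, by rw [← hcount c]; exact hcnt⟩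
        · rintro ⟨⟨x, _, hx⟩, hcnt⟩
          have hpos : 0 < (Finset.univ.filter
              (fun v => wlIter H G1 (Fintype.card G1.V) col1 v = c)).card := by
            rw [hcount c]; omega
          obtain ⟨y, hy⟩ := Finset.card_pos.1 hpos
          exact ⟨⟨y, Finset.mem_univ y, (Finset.mem_filter.1 hy).2⟩, by rw [hcount c]; exact hcnt⟩
      have hc12 := @min'_congr H.C H.linC _ _ hbigs hne1 hne2
      set c1 := (Finset.filter (fun c =>
          1 < (Finset.filter (fun v => wlIter H G1 (Fintype.card G1.V) col1 v = c) Finset.univ).card)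
          (Finset.image (wlIter H G1 (Fintype.card G1.V) col1) Finset.univ)).min' hne1 with hc1def
      set c2 := (Finset.filter (fun c =>
          1 < (Finset.filter (fun v => wlIter H G2 (Fintype.card G1.V) col2 v = c) Finset.univ).card)
          (Finset.image (wlIter H G2 (Fintype.card G1.V) col2) Finset.univ)).min' hne2 with hc2def
      set S1 := Finset.filter (fun v => wlIter H G1 (Fintype.card G1.V) col1 v = c1)
        Finset.univ with hS1def
      set S2 := Finset.filter (fun v => wlIter H G2 (Fintype.card G1.V) col2 v = c2)
        Finset.univ with hS2def
      have hcolq1 : ∀ u : G1.V, wlIter H G1 (Fintype.card G1.V) col1 u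
          = Φ (MTree.map Prod.fst
            (mcol G1 (fun u => (g1 u, nval K d (D+1) G1 (markEmb G1 g1 u) u)) j u)) := by
        intro u
        rw [hfst1 u]
        exact hΦ1 u
      have hcolq2 : ∀ u : G2.V, wlIter H G2 (Fintype.card G1.V) col2 u
          = Φ (MTree.map Prod.fst
            (mcol G2 (fun u => (g2 u, nval K d (D+1) G2 (markEmb G2 g2 u) u)) j u)) := by
        intro u
        rw [hfst2 u]
        exact hΦ2 u
      have hfib : ∀ t, (S1.filter (fun a =>
            mcol G1 (fun u => (g1 u, nval K d (D+1) G1 (markEmb G1 g1 u) u)) j a = t)).card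
          = (S2.filter (fun b =>
            mcol G2 (fun u => (g2 u, nval K d (D+1) G2 (markEmb G2 g2 u) u)) j b = t)).card := by
        intro t
        by_cases hct : Φ (MTree.map Prod.fst t) = c1
        · have e1 : S1.filter (fun a =>
              mcol G1 (fun u => (g1 u, nval K d (D+1) G1 (markEmb G1 g1 u) u)) j a = t)
              = Finset.univ.filter (fun a =>
                mcol G1 (fun u => (g1 u, nval K d (D+1) G1 (markEmb G1 g1 u) u)) j a = t) := by
            ext x
            simp only [hS1def, Finset.filter_filter, Finset.mem_filter, Finset.mem_univ, true_and]
            constructor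
            · rintro ⟨_, hq⟩; exact hq
            · intro hq
              refine ⟨?_, hq⟩
              rw [hcolq1 x, hq]
              exact hct
          have e2 : S2.filter (fun b =>
              mcol G2 (fun u => (g2 u, nval K d (D+1) G2 (markEmb G2 g2 u) u)) j b = t)
              = Finset.univ.filter (fun b =>
                mcol G2 (fun u => (g2 u, nval K d (D+1) G2 (markEmb G2 g2 u) u)) j b = t) := by
            ext x
            simp only [hS2def, Finset.filter_filter, Finset.mem_filter, Finset.mem_univ, true_and]
            constructor
            · rintro ⟨_, hq⟩; exact hq
            · intro hq
              refine ⟨?_, hq⟩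
              rw [hcolq2 x, hq, ← hc12]
              exact hct
          rw [e1, e2]
          exact count_of_map_eq (hms j) t
        · have e1 : S1.filter (fun a =>
              mcol G1 (fun u => (g1 u, nval K d (D+1) G1 (markEmb G1 g1 u) u)) j a = t) = ∅ := by
            refine Finset.filter_eq_empty_iff.2 fun x hx hq => hct ?_
            have hxc : wlIter H G1 (Fintype.card G1.V) col1 x = c1 := by
              rw [hS1def] at hx
              exact (Finset.mem_filter.1 hx).2
            rw [← hq, ← hcolq1 x]
            exact hxc
          have e2 : S2.filter (fun b =>
              mcol G2 (fun u => (g2 u, nval K d (D+1) G2 (markEmb G2 g2 u) u)) j b = t) = ∅ := by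
            refine Finset.filter_eq_empty_iff.2 fun x hx hq => hct ?_
            have hxc : wlIter H G2 (Fintype.card G1.V) col2 x = c2 := by
              rw [hS2def] at hx
              exact (Finset.mem_filter.1 hx).2
            rw [← hq, ← hcolq2 x, hxc, ← hc12]
          rw [e1, e2]
          rfl
      obtain ⟨μ, hμ⟩ := equivOfFiberCards S1.card S1 S2
        (fun a => mcol G1 (fun u => (g1 u, nval K d (D+1) G1 (markEmb G1 g1 u) u)) j a)
        (fun b => mcol G2 (fun u => (g2 u, nval K d (D+1) G2 (markEmb G2 g2 u) u)) j b)
        rfl hfib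
      have hchild : ∀ (x : {x // x ∈ S1}),
          CTree.Iso
            (WLIR H G1 d (fun v => H.hIndiv (wlIter H G1 (Fintype.card G1.V) col1 v) (v = x.1)))
            (WLIR H G2 d (fun v => H.hIndiv (wlIter H G2 (Fintype.card G1.V) col2 v) (v = (μ x).1))) := by
        intro x
        have hq := hμ x
        have hq0 : (g2 (μ x).1, nval K d (D+1) G2 (markEmb G2 g2 (μ x).1) (μ x).1)
            = (g1 x.1, nval K d (D+1) G1 (markEmb G1 g1 x.1) x.1) :=
          mcol_mono (Nat.zero_le j) hq
        have hnv' : nval K d (D+1) G1 (markEmb G1 g1 x.1) x.1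
            = nval K d (D+1) G2 (markEmb G2 g2 (μ x).1) (μ x).1 := (congrArg Prod.snd hq0).symm
        exact ih (D+1) (markEmb G1 g1 x.1) (markEmb G2 g2 (μ x).1) _ _
          (factors_child H G1 G2 g1 g2 col1 col2 hF (Fintype.card G1.V) x.1 (μ x).1)
          x.1 (μ x).1 (fun u h => markEmb_unique G1 g1 x.1 u h)
          (fun u h => markEmb_unique G2 g2 (μ x).1 u h) hnv'
      have hlen1 : ((S1.toList).map (fun vi => WLIR H G1 d
          (fun v => H.hIndiv (wlIter H G1 (Fintype.card G1.V) col1 v) (v = vi)))).length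
          = S1.toList.length := List.length_map _
      have hlen2 : ((S2.toList).map (fun vi => WLIR H G2 d
          (fun v => H.hIndiv (wlIter H G2 (Fintype.card G1.V) col2 v) (v = vi)))).length
          = S2.toList.length := List.length_map _
      refine ctree_iso_node' hlab ((finCongr hlen1).trans ((toListEquiv S1).trans
        (μ.trans ((toListEquiv S2).symm.trans (finCongr hlen2.symm))))) ?_
      intro i
      rw [get_map_toListEquiv S1 _ hlen1 i, get_map_toListEquiv S2 _ hlen2 _]
      have hidx : toListEquiv S2 (finCongr hlen2 (((finCongr hlen1).trans ((toListEquiv S1).trans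
          (μ.trans ((toListEquiv S2).symm.trans (finCongr hlen2.symm))))) i))
          = μ (toListEquiv S1 (finCongr hlen1 i)) := by
        simp only [Equiv.trans_apply]
        rw [show ∀ z, finCongr hlen2 (finCongr hlen2.symm z) = z from fun z => by
          simp [finCongr]]
        exact Equiv.apply_symm_apply _ _
      rw [hidx]
      exact hchild _

end Aux

-- AUXDEV

/-- Let `(G,v)`, `(G',v')` be connected pointed graphs, `d ≥ 0`.
If `G ≢_{WL-IR-d} G'` then some HE-GNN of nesting depth `d+1` classifies `v` and
`v'` differently. -/
theorem wlir_to_hegnn_node (p : ℕ) (H : HashSetup p) (d : ℕ) (G G' : LGraph p)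
    (v : G.V) (v' : G'.V) (hG : G.Connected) (hG' : G'.Connected)
    (h : ¬ WLIRequiv H G G' d) :
    ∃ A : HEGNN (d+1) p 1, ¬ (A.clsP G v ↔ A.clsP G' v') := by
  set K := Fintype.card G.V + Fintype.card G'.V with hKdef
  by_cases hnv : nval K (d+1) p G G.embG v = nval K (d+1) p G' G'.embG v'
  · exfalso
    apply h
    have hmc : mcol G (fun u => (G.embG u, nval K d (p+1) G (markEmb G G.embG u) u)) K v
        = mcol G' (fun u => (G'.embG u, nval K d (p+1) G' (markEmb G' G'.embG u) u)) K v' := hnv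
    have hF0 : (G.embG v, nval K d (p+1) G (markEmb G G.embG v) v)
        = (G'.embG v', nval K d (p+1) G' (markEmb G' G'.embG v') v') :=
      mcol_mono (Nat.zero_le K) hmc
    have hinner : nval K d (p+1) G (markEmb G G.embG v) v
        = nval K d (p+1) G' (markEmb G' G'.embG v') v' := congrArg Prod.snd hF0
    exact mainS H G G' hG hG' K le_rfl d (p+1) (markEmb G G.embG v) (markEmb G' G'.embG v')
      (initCol H G) (initCol H G') (factors_init H G G' v v') v v'
      (fun u hu => markEmb_unique G G.embG v u hu)
      (fun u hu => markEmb_unique G' G'.embG v' u hu) hinner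
  · obtain ⟨A, hA⟩ := hegnn_univ K (d+1) p 1
      (fun t _ => if t = nval K (d+1) p G G.embG v then (1:ℝ) else 0)
    refine ⟨A, ?_⟩
    intro hiff
    have h1 : A.clsP G v := by
      show 0 < A.run G G.embG v 0
      have hrun : A.run G G.embG v 0
          = if nval K (d+1) p G G.embG v = nval K (d+1) p G G.embG v then (1:ℝ) else 0 := by
        rw [hA]
      rw [hrun, if_pos rfl]
      exact zero_lt_one
    have h2 : ¬ A.clsP G' v' := by
      show ¬ 0 < A.run G' G'.embG v' 0
      have hrun : A.run G' G'.embG v' 0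
          = if nval K (d+1) p G' G'.embG v' = nval K (d+1) p G G.embG v then (1:ℝ) else 0 := by
        rw [hA]
      rw [hrun, if_neg (fun hh => hnv hh.symm)]
      exact lt_irrefl 0
    exact h2 (hiff.1 h1)
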